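/- arXiv:2505.14081 — 4 statements merged into one kernel-verified Lean document; each statement's English description precedes it below -/
import Mathlib

section
/- Let f_1, ..., f_N : ℝ^n → ℝ be twice continuously differentiable functions such that for every i and every x ∈ ℝ^n the Hessian ∇²f_i(x) is symmetric with all eigenvalues in [μ, L], where 0 < μ ≤ L. Let W be a real symmetric doubly stochastic N × N matrix with smallest eigenvalue λ_min(W), and let α > 0. Define the distributed gradient descent map T : (ℝ^n)^N → (ℝ^n)^N by T(z)_i = ∑_{j=1}^N W_{ij} z_j − α∇f_i(z_i). Then T is Lipschitz continuous with Lipschitz constant ζ'' = max{|1 − αμ|, |λ_min(W) − αL|} with respect to the Euclidean norm on (ℝ^n)^N. -/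
open scoped RealInnerProductSpace


/-- Self-adjoint quadratic-form norm bound. -/
lemma stmt4_aux_sym_bound {F : Type*} [NormedAddCommGroup F] [InnerProductSpace ℝ F]
    (M : F →L[ℝ] F) (c : ℝ)
    (hsym : ∀ u v : F, ⟪M u, v⟫ = ⟪u, M v⟫)
    (hq : ∀ v : F, |⟪M v, v⟫| ≤ c * ‖v‖ ^ 2) : ∀ v : F, ‖M v‖ ≤ c * ‖v‖ := by
  have key : ∀ v : F, ‖v‖ * ‖M v‖ ≤ c * ‖v‖ ^ 2 := by
    intro v
    by_cases hMv : M v = 0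
    · simp [hMv]
      nlinarith [(abs_nonneg (⟪M v, v⟫)).trans (hq v), sq_nonneg ‖v‖, norm_nonneg v]
    · set w : F := (‖v‖ / ‖M v‖) • M v with hw
      have hMvn : (0:ℝ) < ‖M v‖ := norm_pos_iff.mpr hMv
      have hwnorm : ‖w‖ = ‖v‖ := by
        rw [hw, norm_smul, norm_div, Real.norm_eq_abs, Real.norm_eq_abs,
          abs_of_nonneg (norm_nonneg v), abs_of_nonneg (norm_nonneg (M v))]
        field_simp
      have hinner : ⟪M v, w⟫ = ‖v‖ * ‖M v‖ := by
        rw [hw, real_inner_smul_right, real_inner_self_eq_norm_sq]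
        field_simp
      have hkey : 4 * ⟪M v, w⟫ = ⟪M (v + w), v + w⟫ - ⟪M (v - w), v - w⟫ := by
        have h1 : ⟪M w, v⟫ = ⟪M v, w⟫ := by
          rw [hsym w v, real_inner_comm]
        simp only [map_add, map_sub, inner_add_left, inner_add_right,
          inner_sub_left, inner_sub_right]
        rw [h1]; ring
      have hpar : ‖v + w‖ ^ 2 + ‖v - w‖ ^ 2 = 2 * (‖v‖ ^ 2 + ‖w‖ ^ 2) := by
        have := parallelogram_law_with_norm ℝ v w
        nlinarith [this]
      have h2 : 4 * ⟪M v, w⟫ ≤ c * ‖v + w‖ ^ 2 + c * ‖v - w‖ ^ 2 := by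
        rw [hkey]
        have ha := (abs_le.mp (hq (v + w))).2
        have hb := (neg_le.mp (abs_le.mp (hq (v - w))).1)
        linarith
      rw [hinner] at h2
      have h3 : c * ‖v + w‖ ^ 2 + c * ‖v - w‖ ^ 2 = 4 * (c * ‖v‖ ^ 2) := by
        rw [← mul_add, hpar, hwnorm]; ring
      linarith
  intro v
  by_cases hv : v = 0
  · simp [hv]
  · have hvn : (0:ℝ) < ‖v‖ := norm_pos_iff.mpr hv
    have := key v
    nlinarith

lemma stmt4_aux_rayleigh {N : ℕ} [NeZero N] (W : Matrix (Fin N) (Fin N) ℝ)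
    (hW : W.IsHermitian) (u : EuclideanSpace ℝ (Fin N)) :
    (Finset.univ.inf' Finset.univ_nonempty hW.eigenvalues) * ‖u‖ ^ 2 ≤
      ∑ i, ∑ j, W i j * u j * u i := by
  classical
  set lam := Finset.univ.inf' Finset.univ_nonempty hW.eigenvalues with hlam
  set b := hW.eigenvectorBasis with hb
  have hsym : (Matrix.toEuclideanLin W).IsSymmetric :=
    (Matrix.isHermitian_iff_isSymmetric).1 hW
  set A := Matrix.toEuclideanLin W with hA
  have hAb : ∀ j, A (b j) = hW.eigenvalues j • b j := by
    intro j
    have h := hW.mulVec_eigenvectorBasis j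
    apply (WithLp.equiv 2 _).injective
    funext i
    have := congrFun h i
    simpa [hA, Matrix.toEuclideanLin_apply] using this
  have hq : ⟪u, A u⟫ = ∑ j, hW.eigenvalues j * ⟪b j, u⟫ ^ 2 := by
    rw [← b.sum_inner_mul_inner u (A u)]
    congr 1
    funext j
    rw [← hsym (b j) u, hAb j, inner_smul_left]
    rw [real_inner_comm u (b j)]
    simp; ring
  have hnorm : ‖u‖ ^ 2 = ∑ j, ⟪b j, u⟫ ^ 2 := by
    rw [← real_inner_self_eq_norm_sq, ← b.sum_inner_mul_inner u u]
    congr 1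
    funext j
    rw [real_inner_comm u (b j)]; ring
  have hbound : lam * ‖u‖ ^ 2 ≤ ⟪u, A u⟫ := by
    rw [hq, hnorm, Finset.mul_sum]
    apply Finset.sum_le_sum
    intro j _
    have h1 : lam ≤ hW.eigenvalues j := Finset.inf'_le _ (Finset.mem_univ j)
    nlinarith [sq_nonneg (⟪b j, u⟫)]
  refine hbound.trans (le_of_eq ?_)
  rw [PiLp.inner_apply]
  refine Finset.sum_congr rfl fun i _ => ?_
  simp only [RCLike.inner_apply, conj_trivial]
  have hAi : A u i = ∑ j, W i j * u j := by
    simp [hA, Matrix.toEuclideanLin_apply, Matrix.mulVec, dotProduct]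
  rw [hAi, Finset.sum_mul]

lemma stmt4_aux_stoch_upper {N : ℕ} {F : Type*} [NormedAddCommGroup F]
    [InnerProductSpace ℝ F] (W : Matrix (Fin N) (Fin N) ℝ)
    (hWnn : ∀ i j, 0 ≤ W i j)
    (hWrow : ∀ i, ∑ j, W i j = 1)
    (hWcol : ∀ j, ∑ i, W i j = 1) (v : Fin N → F) :
    ∑ i, ∑ j, W i j * ⟪v j, v i⟫ ≤ ∑ i, ‖v i‖ ^ 2 := by
  classical
  have step1 : ∑ i, ∑ j, W i j * ⟪v j, v i⟫ ≤
      ∑ i, ∑ j, W i j * ((‖v j‖ ^ 2 + ‖v i‖ ^ 2) / 2) := by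
    refine Finset.sum_le_sum fun i _ => Finset.sum_le_sum fun j _ => ?_
    refine mul_le_mul_of_nonneg_left ?_ (hWnn i j)
    nlinarith [real_inner_le_norm (v j) (v i), norm_nonneg (v j), norm_nonneg (v i),
      sq_nonneg (‖v j‖ - ‖v i‖)]
  refine step1.trans (le_of_eq ?_)
  have expand : ∀ i, ∑ j, W i j * ((‖v j‖ ^ 2 + ‖v i‖ ^ 2) / 2) =
      (∑ j, W i j * ‖v j‖ ^ 2) / 2 + ‖v i‖ ^ 2 / 2 := by
    intro i
    have e1 : ∀ j, W i j * ((‖v j‖ ^ 2 + ‖v i‖ ^ 2) / 2) =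
        W i j * ‖v j‖ ^ 2 / 2 + W i j * (‖v i‖ ^ 2 / 2) := fun j => by ring
    rw [Finset.sum_congr rfl fun j _ => e1 j, Finset.sum_add_distrib,
      ← Finset.sum_div, ← Finset.sum_mul, hWrow i, one_mul]
  rw [Finset.sum_congr rfl fun i _ => expand i, Finset.sum_add_distrib]
  have e2 : ∑ i, (∑ j, W i j * ‖v j‖ ^ 2) / 2 = (∑ i, ‖v i‖ ^ 2) / 2 := by
    rw [← Finset.sum_div, Finset.sum_comm]
    congr 1
    refine Finset.sum_congr rfl fun j _ => ?_
    rw [← Finset.sum_mul, hWcol j, one_mul]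
  rw [e2, ← Finset.sum_div]
  ring

lemma stmt4_aux_block_lower {n N : ℕ} [NeZero N] (W : Matrix (Fin N) (Fin N) ℝ)
    (hW : W.IsHermitian) (v : Fin N → EuclideanSpace ℝ (Fin n)) :
    (Finset.univ.inf' Finset.univ_nonempty hW.eigenvalues) * ∑ i, ‖v i‖ ^ 2 ≤
      ∑ i, ∑ j, W i j * ⟪v j, v i⟫ := by
  classical
  set lam := Finset.univ.inf' Finset.univ_nonempty hW.eigenvalues with hlam
  set u : Fin n → EuclideanSpace ℝ (Fin N) := fun k => WithLp.toLp 2 (fun i => v i k) with hu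
  have hnorm : ∀ i, ‖v i‖ ^ 2 = ∑ k, (v i k) ^ 2 := by
    intro i
    rw [PiLp.norm_sq_eq_of_L2]
    exact Finset.sum_congr rfl fun k _ => by rw [Real.norm_eq_abs, sq_abs]
  have hunorm : ∀ k, ‖u k‖ ^ 2 = ∑ i, (v i k) ^ 2 := by
    intro k
    rw [PiLp.norm_sq_eq_of_L2]
    exact Finset.sum_congr rfl fun i _ => by rw [Real.norm_eq_abs, sq_abs]
  have hinner : ∀ i j, ⟪v j, v i⟫ = ∑ k, v j k * v i k := by
    intro i j
    rw [PiLp.inner_apply]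
    exact Finset.sum_congr rfl fun k _ => by simp [RCLike.inner_apply, mul_comm]
  calc lam * ∑ i, ‖v i‖ ^ 2 = ∑ k, lam * ‖u k‖ ^ 2 := by
        simp only [hnorm, hunorm]
        rw [← Finset.mul_sum]
        exact congrArg (lam * ·) Finset.sum_comm
    _ ≤ ∑ k, ∑ i, ∑ j, W i j * u k j * u k i :=
        Finset.sum_le_sum fun k _ => stmt4_aux_rayleigh W hW (u k)
    _ = ∑ i, ∑ j, W i j * ⟪v j, v i⟫ := by
        rw [Finset.sum_comm]
        refine Finset.sum_congr rfl fun i _ => ?_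
        rw [Finset.sum_comm]
        refine Finset.sum_congr rfl fun j _ => ?_
        rw [hinner i j, Finset.mul_sum]
        exact Finset.sum_congr rfl fun k _ => by simp [hu]; ring


noncomputable def stmt4M {n N : ℕ} (f : Fin N → EuclideanSpace ℝ (Fin n) → ℝ)
    (W : Matrix (Fin N) (Fin N) ℝ) (α : ℝ)
    (x : PiLp 2 fun _ : Fin N => EuclideanSpace ℝ (Fin n)) :
    (PiLp 2 fun _ : Fin N => EuclideanSpace ℝ (Fin n)) →L[ℝ]
      (PiLp 2 fun _ : Fin N => EuclideanSpace ℝ (Fin n)) :=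
  ((PiLp.continuousLinearEquiv 2 ℝ
      (fun _ : Fin N => EuclideanSpace ℝ (Fin n))).symm :
        (∀ _ : Fin N, EuclideanSpace ℝ (Fin n)) →L[ℝ] _).comp
    ((ContinuousLinearMap.pi fun i =>
        (∑ j, W i j • ContinuousLinearMap.proj j) -
          α • ((fderiv ℝ (gradient (f i)) (x i)).comp (ContinuousLinearMap.proj i))).comp
      ((PiLp.continuousLinearEquiv 2 ℝ (fun _ : Fin N => EuclideanSpace ℝ (Fin n))) :
        _ →L[ℝ] (∀ _ : Fin N, EuclideanSpace ℝ (Fin n))))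

lemma stmt4M_apply {n N : ℕ} (f : Fin N → EuclideanSpace ℝ (Fin n) → ℝ)
    (W : Matrix (Fin N) (Fin N) ℝ) (α : ℝ)
    (x v : PiLp 2 fun _ : Fin N => EuclideanSpace ℝ (Fin n)) (i : Fin N) :
    stmt4M f W α x v i =
      ∑ j, W i j • v j - α • fderiv ℝ (gradient (f i)) (x i) (v i) := by
  simp [stmt4M]

lemma stmt4M_hasFDerivAt {n N : ℕ} (f : Fin N → EuclideanSpace ℝ (Fin n) → ℝ)
    (W : Matrix (Fin N) (Fin N) ℝ) (α : ℝ)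
    (hC2 : ∀ i, ContDiff ℝ 2 (f i))
    (T : (PiLp 2 fun _ : Fin N => EuclideanSpace ℝ (Fin n)) →
      PiLp 2 fun _ : Fin N => EuclideanSpace ℝ (Fin n))
    (hT : ∀ z i, T z i = ∑ j, W i j • z j - α • gradient (f i) (z i))
    (x : PiLp 2 fun _ : Fin N => EuclideanSpace ℝ (Fin n)) :
    HasFDerivAt T (stmt4M f W α x) x := by
  set e := PiLp.continuousLinearEquiv 2 ℝ (fun _ : Fin N => EuclideanSpace ℝ (Fin n)) with he
  have hgradC : ∀ i, ContDiff ℝ 1 (gradient (f i)) := by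
    intro i
    have h1 : ContDiff ℝ 1 (fderiv ℝ (f i)) := (hC2 i).fderiv_right (by norm_num)
    have h2 : gradient (f i) = fun y =>
        (InnerProductSpace.toDual ℝ (EuclideanSpace ℝ (Fin n))).symm (fderiv ℝ (f i) y) := rfl
    rw [h2]
    exact (InnerProductSpace.toDual ℝ (EuclideanSpace ℝ (Fin n))).symm.contDiff.comp h1
  have hgrad : ∀ i (y : EuclideanSpace ℝ (Fin n)), HasFDerivAt (gradient (f i))
      (fderiv ℝ (gradient (f i)) y) y := fun i y =>
    (((hgradC i).differentiable one_ne_zero) y).hasFDerivAt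
  have h1 : HasFDerivAt (fun y : ∀ _ : Fin N, EuclideanSpace ℝ (Fin n) =>
      (fun i => ∑ j, W i j • y j - α • gradient (f i) (y i) :
        ∀ _ : Fin N, EuclideanSpace ℝ (Fin n)))
      (ContinuousLinearMap.pi fun i =>
        (∑ j, W i j • ContinuousLinearMap.proj j) -
          α • ((fderiv ℝ (gradient (f i)) (x i)).comp (ContinuousLinearMap.proj i)))
      (e x) := by
    apply hasFDerivAt_pi'' (𝕜 := ℝ)
    intro i
    rw [ContinuousLinearMap.proj_pi]
    have hlin : HasFDerivAt
        (fun y : ∀ _ : Fin N, EuclideanSpace ℝ (Fin n) => ∑ j, W i j • y j)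
        (∑ j, W i j • (ContinuousLinearMap.proj j :
          (∀ _ : Fin N, EuclideanSpace ℝ (Fin n)) →L[ℝ] EuclideanSpace ℝ (Fin n))) (e x) := by
      apply HasFDerivAt.fun_sum
      intro j _
      exact (hasFDerivAt_apply j (e x)).const_smul (W i j)
    have hg : HasFDerivAt
        (fun y : ∀ _ : Fin N, EuclideanSpace ℝ (Fin n) => gradient (f i) (y i))
        ((fderiv ℝ (gradient (f i)) (x i)).comp (ContinuousLinearMap.proj i)) (e x) :=
      HasFDerivAt.comp (g := gradient (f i)) (e x) (hgrad i (x i)) (hasFDerivAt_apply (𝕜 := ℝ) i (e x))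
    exact hlin.sub (hg.const_smul α)
  have h2 := ((e.symm.hasFDerivAt).comp x (h1.comp x e.hasFDerivAt) :)
  have hTeq : T = fun z => e.symm
      ((fun y : ∀ _ : Fin N, EuclideanSpace ℝ (Fin n) =>
        (fun i => ∑ j, W i j • y j - α • gradient (f i) (y i) :
          ∀ _ : Fin N, EuclideanSpace ℝ (Fin n))) (e z)) := by
    funext z
    ext i : 1
    exact hT z i
  rw [hTeq]
  convert h2 using 1
  all_goals rfl

lemma stmt4_aux_lam_le_one {N : ℕ} [NeZero N] (W : Matrix (Fin N) (Fin N) ℝ)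
    (hW : W.IsHermitian) (hWnn : ∀ i j, 0 ≤ W i j) (hWrow : ∀ i, ∑ j, W i j = 1) :
    Finset.univ.inf' Finset.univ_nonempty hW.eigenvalues ≤ 1 := by
  classical
  set i0 : Fin N := ⟨0, Nat.pos_of_ne_zero (NeZero.ne N)⟩
  set u : EuclideanSpace ℝ (Fin N) := EuclideanSpace.single i0 1 with hu
  have h1 := stmt4_aux_rayleigh W hW u
  have hnu : ‖u‖ = 1 := by rw [hu, EuclideanSpace.norm_single]; simp
  have hsum : ∑ i, ∑ j, W i j * u j * u i = W i0 i0 := by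
    rw [hu]
    simp [EuclideanSpace.single_apply, mul_ite, ite_mul, Finset.sum_ite_eq']
  have hW00 : W i0 i0 ≤ 1 := by
    rw [← hWrow i0]
    exact Finset.single_le_sum (fun j _ => hWnn i0 j) (Finset.mem_univ i0)
  rw [hnu, hsum] at h1
  simpa using h1.trans hW00


/-- The distributed gradient descent map
`T(z)_i = ∑_j W i j • z j − α • ∇f_i(z_i)` is Lipschitz with constant
`ζ'' = max |1 − αμ| |λmin(W) − αL|`, when each `f i` is `C²` with symmetric Hessian whose
eigenvalues lie in `[μ, L]` and `W` is symmetric doubly stochastic. -/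
theorem stmt4 {n N : ℕ} [NeZero N]
    (f : Fin N → EuclideanSpace ℝ (Fin n) → ℝ) (μ L α : ℝ)
    (hμ : 0 < μ) (hμL : μ ≤ L) (hα : 0 < α)
    (hC2 : ∀ i, ContDiff ℝ 2 (f i))
    (hHsym : ∀ i x u v, ⟪fderiv ℝ (gradient (f i)) x u, v⟫ =
      ⟪u, fderiv ℝ (gradient (f i)) x v⟫)
    (hHess : ∀ i x v, μ * ‖v‖ ^ 2 ≤ ⟪fderiv ℝ (gradient (f i)) x v, v⟫ ∧
      ⟪fderiv ℝ (gradient (f i)) x v, v⟫ ≤ L * ‖v‖ ^ 2)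
    (W : Matrix (Fin N) (Fin N) ℝ) (hW : W.IsHermitian)
    (hWnn : ∀ i j, 0 ≤ W i j)
    (hWrow : ∀ i, ∑ j, W i j = 1)
    (hWcol : ∀ j, ∑ i, W i j = 1)
    (T : (PiLp 2 fun _ : Fin N => EuclideanSpace ℝ (Fin n)) →
      PiLp 2 fun _ : Fin N => EuclideanSpace ℝ (Fin n))
    (hT : ∀ z i, T z i = ∑ j, W i j • z j - α • gradient (f i) (z i)) :
    ∀ z w, ‖T z - T w‖ ≤
      max |1 - α * μ|
        |Finset.univ.inf' Finset.univ_nonempty hW.eigenvalues - α * L| * ‖z - w‖ := by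
  classical
  set lam := Finset.univ.inf' Finset.univ_nonempty hW.eigenvalues with hlam
  set ζ := max |1 - α * μ| |lam - α * L| with hζ
  have hWs : ∀ i j, W i j = W j i := by
    intro i j
    have h := congrFun (congrFun hW i) j
    rw [Matrix.conjTranspose_apply] at h
    simpa using h.symm
  have hcross : ∀ x u v, ⟪stmt4M f W α x u, v⟫ =
      (∑ i, ∑ j, W i j * ⟪u j, v i⟫) -
        α * ∑ i, ⟪fderiv ℝ (gradient (f i)) (x i) (u i), v i⟫ := by
    intro x u v
    rw [PiLp.inner_apply]
    have hterm : ∀ i, ⟪stmt4M f W α x u i, v i⟫ =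
        (∑ j, W i j * ⟪u j, v i⟫) -
          α * ⟪fderiv ℝ (gradient (f i)) (x i) (u i), v i⟫ := by
      intro i
      rw [stmt4M_apply, inner_sub_left, real_inner_smul_left, sum_inner]
      congr 1
      exact Finset.sum_congr rfl fun j _ => real_inner_smul_left _ _ _
    rw [Finset.sum_congr rfl fun i _ => hterm i, Finset.sum_sub_distrib, ← Finset.mul_sum]
  have hsym : ∀ x u v, ⟪stmt4M f W α x u, v⟫ = ⟪u, stmt4M f W α x v⟫ := by
    intro x u v
    rw [hcross, real_inner_comm, hcross]
    congr 1
    · rw [Finset.sum_comm]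
      refine Finset.sum_congr rfl fun i _ => Finset.sum_congr rfl fun j _ => ?_
      rw [hWs j i, real_inner_comm]
    · congr 1
      refine Finset.sum_congr rfl fun i _ => ?_
      rw [hHsym i (x i) (u i) (v i), real_inner_comm]
  have hnormsq : ∀ v : PiLp 2 fun _ : Fin N => EuclideanSpace ℝ (Fin n),
      ‖v‖ ^ 2 = ∑ i, ‖v i‖ ^ 2 := fun v => PiLp.norm_sq_eq_of_L2 _ v
  have hlow : ∀ x v, (lam - α * L) * ‖v‖ ^ 2 ≤ ⟪stmt4M f W α x v, v⟫ := by
    intro x v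
    rw [hcross, hnormsq]
    have h1 := stmt4_aux_block_lower W hW (fun i => v i)
    have h2 : ∑ i, ⟪fderiv ℝ (gradient (f i)) (x i) (v i), v i⟫ ≤
        L * ∑ i, ‖v i‖ ^ 2 := by
      rw [Finset.mul_sum]
      exact Finset.sum_le_sum fun i _ => (hHess i (x i) (v i)).2
    have h3 : α * ∑ i, ⟪fderiv ℝ (gradient (f i)) (x i) (v i), v i⟫ ≤
        α * (L * ∑ i, ‖v i‖ ^ 2) := mul_le_mul_of_nonneg_left h2 hα.le
    nlinarith [h1, h3]
  have hupp : ∀ x v, ⟪stmt4M f W α x v, v⟫ ≤ (1 - α * μ) * ‖v‖ ^ 2 := by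
    intro x v
    rw [hcross, hnormsq]
    have h1 := stmt4_aux_stoch_upper W hWnn hWrow hWcol (fun i => v i)
    have h2 : μ * ∑ i, ‖v i‖ ^ 2 ≤
        ∑ i, ⟪fderiv ℝ (gradient (f i)) (x i) (v i), v i⟫ := by
      rw [Finset.mul_sum]
      exact Finset.sum_le_sum fun i _ => (hHess i (x i) (v i)).1
    have h3 : α * (μ * ∑ i, ‖v i‖ ^ 2) ≤
        α * ∑ i, ⟪fderiv ℝ (gradient (f i)) (x i) (v i), v i⟫ :=
      mul_le_mul_of_nonneg_left h2 hα.le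
    nlinarith [h1, h3]
  have hlam1 : lam ≤ 1 := stmt4_aux_lam_le_one W hW hWnn hWrow
  set d : ℝ := ((lam - α * L) + (1 - α * μ)) / 2 with hd
  set c0 : ℝ := ((1 - α * μ) - (lam - α * L)) / 2 with hc0
  have hc0nn : 0 ≤ c0 := by
    rw [hc0]
    nlinarith [mul_le_mul_of_nonneg_left hμL hα.le]
  have hM0 : ∀ x v, ‖(stmt4M f W α x - d • ContinuousLinearMap.id ℝ
      (PiLp 2 fun _ : Fin N => EuclideanSpace ℝ (Fin n))) v‖ ≤ c0 * ‖v‖ := by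
    intro x
    apply stmt4_aux_sym_bound
    · intro u v
      simp only [ContinuousLinearMap.sub_apply, ContinuousLinearMap.smul_apply,
        ContinuousLinearMap.id_apply, inner_sub_left, inner_sub_right,
        real_inner_smul_left, real_inner_smul_right]
      rw [hsym x u v]
    · intro v
      have hq : ⟪(stmt4M f W α x - d • ContinuousLinearMap.id ℝ
          (PiLp 2 fun _ : Fin N => EuclideanSpace ℝ (Fin n))) v, v⟫ =
          ⟪stmt4M f W α x v, v⟫ - d * ‖v‖ ^ 2 := by
        simp only [ContinuousLinearMap.sub_apply, ContinuousLinearMap.smul_apply,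
          ContinuousLinearMap.id_apply, inner_sub_left, real_inner_smul_left]
        rw [real_inner_self_eq_norm_sq]
      rw [hq, abs_le]
      constructor
      · have := hlow x v
        rw [hd, hc0]; nlinarith [this]
      · have := hupp x v
        rw [hd, hc0]; nlinarith [this]
  have hMv : ∀ x v, ‖stmt4M f W α x v‖ ≤ ζ * ‖v‖ := by
    intro x v
    have h1 := hM0 x v
    have h2 : stmt4M f W α x v = (stmt4M f W α x - d • ContinuousLinearMap.id ℝ
        (PiLp 2 fun _ : Fin N => EuclideanSpace ℝ (Fin n))) v + d • v := by
      simp [ContinuousLinearMap.sub_apply]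
    have h3 : ‖stmt4M f W α x v‖ ≤ c0 * ‖v‖ + |d| * ‖v‖ := by
      rw [h2]
      refine (norm_add_le _ _).trans (add_le_add h1 ?_)
      rw [norm_smul, Real.norm_eq_abs]
    have h4 : c0 + |d| ≤ ζ := by
      have e1 : (1 - α * μ) ≤ |1 - α * μ| := le_abs_self _
      have e2 : -(lam - α * L) ≤ |lam - α * L| := neg_le_abs _
      have e3 : |1 - α * μ| ≤ ζ := le_max_left _ _
      have e4 : |lam - α * L| ≤ ζ := le_max_right _ _
      rcases abs_cases d with ⟨he, _⟩ | ⟨he, _⟩ <;>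
        rw [he] <;> rw [hd, hc0] at * <;> linarith
    calc ‖stmt4M f W α x v‖ ≤ c0 * ‖v‖ + |d| * ‖v‖ := h3
      _ = (c0 + |d|) * ‖v‖ := by ring
      _ ≤ ζ * ‖v‖ := mul_le_mul_of_nonneg_right h4 (norm_nonneg v)
  have hζ0 : 0 ≤ ζ := le_trans (abs_nonneg _) (le_max_left _ _)
  have hop : ∀ x, ‖stmt4M f W α x‖ ≤ ζ := fun x =>
    ContinuousLinearMap.opNorm_le_bound _ hζ0 (hMv x)
  intro z w
  have key := (convex_univ : Convex ℝ (Set.univ :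
      Set (PiLp 2 fun _ : Fin N => EuclideanSpace ℝ (Fin n)))).norm_image_sub_le_of_norm_hasFDerivWithin_le
    (fun x _ => (stmt4M_hasFDerivAt f W α hC2 T hT x).hasFDerivWithinAt)
    (fun x _ => hop x) (Set.mem_univ w) (Set.mem_univ z)
  exact key
end

section
/- Let f_1, ..., f_N : ℝ^n → ℝ be twice continuously differentiable with symmetric Hessians whose eigenvalues all lie in [μ, L], 0 < μ ≤ L; let W be a real symmetric doubly stochastic N × N matrix with smallest eigenvalue λ_min(W); let α > 0; and suppose ζ'' = max{|1 − αμ|, |λ_min(W) − αL|} < 1. Then the distributed gradient descent map T(z)_i = ∑_j W_{ij} z_j − α∇f_i(z_i) has a unique fixed point x̄ ∈ (ℝ^n)^N, and the iterates z_{k+1} = T(z_k) satisfy ‖z_k − x̄‖ ≤ (ζ'')^k ‖z_0 − x̄‖ for every k ≥ 0. -/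
open scoped RealInnerProductSpace

lemma aux_opnorm_le {E : Type*} [NormedAddCommGroup E] [InnerProductSpace ℝ E]
    (A : E →L[ℝ] E) (M : ℝ) (hM : 0 ≤ M)
    (hsym : ∀ u v, ⟪A u, v⟫ = ⟪u, A v⟫)
    (hq : ∀ v, |⟪A v, v⟫| ≤ M * ‖v‖ ^ 2) : ‖A‖ ≤ M := by
  refine A.opNorm_le_bound hM (fun u => ?_)
  by_cases h0 : A u = 0
  · rw [h0, norm_zero]; positivity
  have hu0 : u ≠ 0 := by rintro rfl; simp at h0
  have hAu : 0 < ‖A u‖ := norm_pos_iff.2 h0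
  have hun : 0 < ‖u‖ := norm_pos_iff.2 hu0
  set w : E := (‖u‖ / ‖A u‖) • A u with hw
  have hwn : ‖w‖ = ‖u‖ := by
    rw [hw, norm_smul, Real.norm_eq_abs, abs_of_nonneg (by positivity), div_mul_cancel₀]
    exact hAu.ne'
  have hinner : ⟪A u, w⟫ = ‖u‖ * ‖A u‖ := by
    rw [hw, real_inner_smul_right, real_inner_self_eq_norm_sq]
    field_simp
  have expand : ⟪A (u + w), u + w⟫ - ⟪A (u - w), u - w⟫ = 4 * ⟪A u, w⟫ := by
    have hba : ⟪A w, u⟫ = ⟪A u, w⟫ := by rw [hsym w u, real_inner_comm]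
    simp only [map_add, map_sub, inner_add_left, inner_add_right, inner_sub_left,
      inner_sub_right]
    rw [hba]; ring
  have key : 4 * (‖u‖ * ‖A u‖) ≤ 4 * (M * ‖u‖ ^ 2) := by
    calc 4 * (‖u‖ * ‖A u‖) = ⟪A (u + w), u + w⟫ - ⟪A (u - w), u - w⟫ := by
          rw [expand, hinner]
      _ ≤ |⟪A (u + w), u + w⟫| + |⟪A (u - w), u - w⟫| := by
          have := abs_nonneg (⟪A (u - w), u - w⟫)
          have h1 := le_abs_self (⟪A (u + w), u + w⟫)
          have h2 := neg_abs_le (⟪A (u - w), u - w⟫)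
          linarith
      _ ≤ M * ‖u + w‖ ^ 2 + M * ‖u - w‖ ^ 2 := add_le_add (hq _) (hq _)
      _ = M * (‖u + w‖ ^ 2 + ‖u - w‖ ^ 2) := by ring
      _ = M * (2 * (‖u‖ ^ 2 + ‖w‖ ^ 2)) := by
          rw [norm_add_sq_real, norm_sub_sq_real]; ring
      _ = 4 * (M * ‖u‖ ^ 2) := by rw [hwn]; ring
  have h4 : ‖u‖ * ‖A u‖ ≤ M * ‖u‖ ^ 2 := by linarith
  exact le_of_mul_le_mul_left (by nlinarith) hun

lemma aux_quad_lower {N : ℕ} [NeZero N] (W : Matrix (Fin N) (Fin N) ℝ) (hW : W.IsHermitian)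
    (y : Fin N → ℝ) :
    (Finset.univ.inf' Finset.univ_nonempty hW.eigenvalues) * ∑ i, y i ^ 2 ≤
      ∑ i, ∑ j, W i j * y j * y i := by
  classical
  set c := Finset.univ.inf' Finset.univ_nonempty hW.eigenvalues with hc
  have hs : (Matrix.toEuclideanLin W).IsSymmetric :=
    Matrix.isHermitian_iff_isSymmetric.1 hW
  have hn : Module.finrank ℝ (EuclideanSpace ℝ (Fin N)) = Fintype.card (Fin N) :=
    finrank_euclideanSpace
  set B := hs.eigenvectorBasis hn with hB
  set lam := hs.eigenvalues hn with hlam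
  set v : EuclideanSpace ℝ (Fin N) := (WithLp.equiv 2 (Fin N → ℝ)).symm y with hv
  have hcle : ∀ k, c ≤ lam k := by
    intro k
    have : lam k = hW.eigenvalues ((Fintype.equivOfCardEq (Fintype.card_fin _)) k) := by
      simp [Matrix.IsHermitian.eigenvalues, Matrix.IsHermitian.eigenvalues₀, hlam]
    rw [this]
    exact Finset.inf'_le _ (Finset.mem_univ _)
  have h1 : ⟪Matrix.toEuclideanLin W v, v⟫ = ∑ i, ∑ j, W i j * y j * y i := by
    simp [Matrix.toEuclideanLin_apply, PiLp.inner_apply, RCLike.inner_apply, Matrix.mulVec,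
      dotProduct, Finset.sum_mul, hv]
    refine Finset.sum_congr rfl fun i _ => ?_
    rw [Finset.mul_sum]
    exact Finset.sum_congr rfl fun j _ => by ring
  have h2 : ⟪Matrix.toEuclideanLin W v, v⟫ = ∑ k, lam k * (B.repr v k * B.repr v k) := by
    have e1 : ⟪Matrix.toEuclideanLin W v, v⟫
        = ⟪B.repr (Matrix.toEuclideanLin W v), B.repr v⟫ := (B.repr.inner_map_map _ _).symm
    rw [e1]
    simp only [PiLp.inner_apply, RCLike.inner_apply, conj_trivial]
    refine Finset.sum_congr rfl fun k _ => ?_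
    rw [hs.eigenvectorBasis_apply_self_apply hn v k]
    simp only [RCLike.ofReal_real_eq_id, id_eq, hlam]
    ring
  have h3 : ∑ i, y i ^ 2 = ∑ k, B.repr v k * B.repr v k := by
    have e2 : (∑ i, y i ^ 2) = ⟪v, v⟫ := by
      rw [hv, PiLp.inner_apply]
      simp [RCLike.inner_apply, pow_two]
    have e3 : ⟪v, v⟫ = ⟪B.repr v, B.repr v⟫ := (B.repr.inner_map_map v v).symm
    rw [e2, e3]
    simp only [PiLp.inner_apply, RCLike.inner_apply, conj_trivial]
  rw [← h1, h2, h3, Finset.mul_sum]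
  refine Finset.sum_le_sum fun k _ => ?_
  exact mul_le_mul_of_nonneg_right (hcle k) (mul_self_nonneg _)

lemma aux_quad_upper {N : ℕ} (W : Matrix (Fin N) (Fin N) ℝ)
    (hWnn : ∀ i j, 0 ≤ W i j)
    (hWrow : ∀ i, ∑ j, W i j = 1)
    (hWcol : ∀ j, ∑ i, W i j = 1)
    (y : Fin N → ℝ) :
    ∑ i, ∑ j, W i j * (y j * y i) ≤ ∑ i, y i ^ 2 := by
  have key : ∑ i, ∑ j, (W i j * (y j * y i) + W i j * (y j * y i))
      ≤ ∑ i, ∑ j, (W i j * y i ^ 2 + W i j * y j ^ 2) := by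
    refine Finset.sum_le_sum fun i _ => Finset.sum_le_sum fun j _ => ?_
    nlinarith [sq_nonneg (y i - y j), hWnn i j, mul_le_mul_of_nonneg_left
      (by nlinarith [sq_nonneg (y i - y j)] : 2 * (y j * y i) ≤ y i ^ 2 + y j ^ 2) (hWnn i j)]
  have lhs : ∑ i, ∑ j, (W i j * (y j * y i) + W i j * (y j * y i))
      = 2 * ∑ i, ∑ j, W i j * (y j * y i) := by
    simp [Finset.sum_add_distrib, two_mul]
  have rhs : ∑ i, ∑ j, (W i j * y i ^ 2 + W i j * y j ^ 2)
      = ∑ i, ∑ j, W i j * y i ^ 2 + ∑ i, ∑ j, W i j * y j ^ 2 := by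
    simp [Finset.sum_add_distrib]
  have e1 : ∑ i, ∑ j, W i j * y i ^ 2 = ∑ i : Fin N, y i ^ 2 := by
    refine Finset.sum_congr rfl fun i _ => ?_
    rw [← Finset.sum_mul, hWrow i, one_mul]
  have e2 : ∑ i, ∑ j, W i j * y j ^ 2 = ∑ i : Fin N, y i ^ 2 := by
    rw [Finset.sum_comm]
    refine Finset.sum_congr rfl fun j _ => ?_
    rw [← Finset.sum_mul, hWcol j, one_mul]
  rw [lhs, rhs, e1, e2] at key
  linarith

/-- Under the assumptions of Statement 4, if
`ζ'' = max |1 − αμ| |λmin(W) − αL| < 1`, the DGD map `T` has a unique fixed point `x̄` and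
the iterates `z_{k+1} = T(z_k)` satisfy `‖z_k − x̄‖ ≤ ζ''^k ‖z_0 − x̄‖`. -/
theorem stmt5 {n N : ℕ} [NeZero N]
    (f : Fin N → EuclideanSpace ℝ (Fin n) → ℝ) (μ L α : ℝ)
    (hμ : 0 < μ) (hμL : μ ≤ L) (hα : 0 < α)
    (hC2 : ∀ i, ContDiff ℝ 2 (f i))
    (hHsym : ∀ i x u v, ⟪fderiv ℝ (gradient (f i)) x u, v⟫ =
      ⟪u, fderiv ℝ (gradient (f i)) x v⟫)
    (hHess : ∀ i x v, μ * ‖v‖ ^ 2 ≤ ⟪fderiv ℝ (gradient (f i)) x v, v⟫ ∧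
      ⟪fderiv ℝ (gradient (f i)) x v, v⟫ ≤ L * ‖v‖ ^ 2)
    (W : Matrix (Fin N) (Fin N) ℝ) (hW : W.IsHermitian)
    (hWnn : ∀ i j, 0 ≤ W i j)
    (hWrow : ∀ i, ∑ j, W i j = 1)
    (hWcol : ∀ j, ∑ i, W i j = 1)
    (ζ'' : ℝ)
    (hζ'' : ζ'' = max |1 - α * μ|
      |Finset.univ.inf' Finset.univ_nonempty hW.eigenvalues - α * L|)
    (hζlt : ζ'' < 1)
    (T : (PiLp 2 fun _ : Fin N => EuclideanSpace ℝ (Fin n)) →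
      PiLp 2 fun _ : Fin N => EuclideanSpace ℝ (Fin n))
    (hT : ∀ z i, T z i = ∑ j, W i j • z j - α • gradient (f i) (z i)) :
    ∃ xbar, T xbar = xbar ∧ (∀ y, T y = y → y = xbar) ∧
      ∀ z : ℕ → PiLp 2 fun _ : Fin N => EuclideanSpace ℝ (Fin n),
        (∀ k, z (k + 1) = T (z k)) →
          ∀ k, ‖z k - xbar‖ ≤ ζ'' ^ k * ‖z 0 - xbar‖ := by
  classical
  set lmin := Finset.univ.inf' Finset.univ_nonempty hW.eigenvalues with hlmin
  have hζnn : 0 ≤ ζ'' := hζ'' ▸ le_trans (abs_nonneg _) (le_max_left _ _)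
  have hWsymm : ∀ i j, W i j = W j i := by
    intro i j
    conv_lhs => rw [← hW.eq]
    simp [Matrix.conjTranspose_apply]
  -- gradient is differentiable
  have hgd : ∀ i, Differentiable ℝ (gradient (f i)) := by
    intro i
    have h1 : ContDiff ℝ 1 (fderiv ℝ (f i)) := (hC2 i).fderiv_right (by norm_num)
    have h2 : gradient (f i) = fun x =>
        (InnerProductSpace.toDual ℝ (EuclideanSpace ℝ (Fin n))).symm (fderiv ℝ (f i) x) := rfl
    rw [h2]
    exact (InnerProductSpace.toDual ℝ _).symm.differentiable.comp (h1.differentiable one_ne_zero)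
  -- linear maps
  let Wlin : (PiLp 2 fun _ : Fin N => EuclideanSpace ℝ (Fin n)) →ₗ[ℝ]
      (PiLp 2 fun _ : Fin N => EuclideanSpace ℝ (Fin n)) :=
    { toFun := fun z => WithLp.toLp 2 fun i => ∑ j, W i j • z j
      map_add' := fun a b => PiLp.ext fun i => by
        simp [PiLp.add_apply, smul_add, Finset.sum_add_distrib]
      map_smul' := fun c a => PiLp.ext fun i => by
        simp [PiLp.smul_apply, Finset.smul_sum, smul_comm c] }
  let Hlin : (PiLp 2 fun _ : Fin N => EuclideanSpace ℝ (Fin n)) →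
      ((PiLp 2 fun _ : Fin N => EuclideanSpace ℝ (Fin n)) →ₗ[ℝ]
      (PiLp 2 fun _ : Fin N => EuclideanSpace ℝ (Fin n))) := fun x =>
    { toFun := fun v => WithLp.toLp 2 fun i => fderiv ℝ (gradient (f i)) (x i) (v i)
      map_add' := fun a b => PiLp.ext fun i => by simp [PiLp.add_apply]
      map_smul' := fun c a => PiLp.ext fun i => by simp [PiLp.smul_apply] }
  let A : (PiLp 2 fun _ : Fin N => EuclideanSpace ℝ (Fin n)) →
      ((PiLp 2 fun _ : Fin N => EuclideanSpace ℝ (Fin n)) →L[ℝ]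
      (PiLp 2 fun _ : Fin N => EuclideanSpace ℝ (Fin n))) := fun x =>
    have : ContinuousSMul ℝ (PiLp 2 fun _ : Fin N => EuclideanSpace ℝ (Fin n)) := inferInstance
    LinearMap.toContinuousLinearMap Wlin - α • LinearMap.toContinuousLinearMap (Hlin x)
  have hAapp : ∀ x v i, A x v i =
      (∑ j, W i j • v j) - α • fderiv ℝ (gradient (f i)) (x i) (v i) := by
    intro x v i
    simp [A, Wlin, Hlin]
  -- derivative of T
  have hDeriv : ∀ x, HasFDerivAt T (A x) x := by
    intro x
    have hTfun : T = fun z => (WithLp.toLp 2 fun i => ∑ j, W i j • z j - α • gradient (f i) (z i) :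
        PiLp 2 fun _ : Fin N => EuclideanSpace ℝ (Fin n)) := by
      funext z
      exact PiLp.ext fun i => hT z i
    rw [hTfun]
    let e := PiLp.continuousLinearEquiv 2 ℝ (fun _ : Fin N => EuclideanSpace ℝ (Fin n))
    rw [← e.comp_hasFDerivAt_iff]
    refine hasFDerivAt_pi'' fun i => ?_
    let pj : ∀ _ : Fin N, (PiLp 2 fun _ : Fin N => EuclideanSpace ℝ (Fin n)) →L[ℝ]
        EuclideanSpace ℝ (Fin n) := fun j =>
      (ContinuousLinearMap.proj (R := ℝ) (φ := fun _ : Fin N => EuclideanSpace ℝ (Fin n)) j).comp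
        (e : (PiLp 2 fun _ : Fin N => EuclideanSpace ℝ (Fin n)) →L[ℝ]
          (∀ _ : Fin N, EuclideanSpace ℝ (Fin n)))
    have h1 : HasFDerivAt (fun z : PiLp 2 fun _ : Fin N => EuclideanSpace ℝ (Fin n) =>
        ∑ j, W i j • z j) (∑ j, W i j • pj j) x :=
      (HasFDerivAt.sum fun j _ => (pj j).hasFDerivAt.const_smul (W i j)).congr_of_eventuallyEq
        (Filter.Eventually.of_forall fun z => by simp [pj, e, Finset.sum_apply])
    have h2 : HasFDerivAt (fun z : PiLp 2 fun _ : Fin N => EuclideanSpace ℝ (Fin n) =>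
        gradient (f i) (z i)) ((fderiv ℝ (gradient (f i)) (x i)).comp (pj i)) x :=
      by have := ((hgd i (x i)).hasFDerivAt).comp x (pj i).hasFDerivAt; exact this
    have h3 := h1.sub (h2.const_smul α)
    have heq : (∑ j, W i j • pj j) - α • ((fderiv ℝ (gradient (f i)) (x i)).comp (pj i)) =
        (pj i).comp (A x) := by
      refine ContinuousLinearMap.ext fun v => ?_
      simp only [ContinuousLinearMap.sub_apply, ContinuousLinearMap.sum_apply,
        ContinuousLinearMap.smul_apply, ContinuousLinearMap.comp_apply,
        ContinuousLinearMap.proj_apply]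
      show (∑ j, W i j • v j) - α • fderiv ℝ (gradient (f i)) (x i) (v i) = A x v i
      rw [hAapp]
    exact heq ▸ h3
  -- norm squared decomposition
  have hnormsq : ∀ v : PiLp 2 fun _ : Fin N => EuclideanSpace ℝ (Fin n),
      ‖v‖ ^ 2 = ∑ i, ‖v i‖ ^ 2 := by
    intro v
    rw [← real_inner_self_eq_norm_sq, PiLp.inner_apply]
    exact Finset.sum_congr rfl fun i _ => real_inner_self_eq_norm_sq (v i)
  -- inner product with A
  have hinnerA : ∀ x u v, ⟪A x u, v⟫ =
      (∑ i, ∑ j, W i j * ⟪u j, v i⟫) -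
        α * ∑ i, ⟪fderiv ℝ (gradient (f i)) (x i) (u i), v i⟫ := by
    intro x u v
    rw [PiLp.inner_apply]
    have key : ∀ i : Fin N, ⟪A x u i, v i⟫ = (∑ j, W i j * ⟪u j, v i⟫) -
        α * ⟪fderiv ℝ (gradient (f i)) (x i) (u i), v i⟫ := by
      intro i
      rw [hAapp, inner_sub_left, real_inner_smul_left, sum_inner]
      congr 1
      exact Finset.sum_congr rfl fun j _ => real_inner_smul_left _ _ _
    simp_rw [key]
    rw [Finset.sum_sub_distrib, Finset.mul_sum]
  -- symmetry
  have hsymA : ∀ x u v, ⟪A x u, v⟫ = ⟪u, A x v⟫ := by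
    intro x u v
    have hr : ⟪u, A x v⟫ = ⟪A x v, u⟫ := real_inner_comm _ _
    rw [hr, hinnerA, hinnerA]
    congr 1
    · rw [Finset.sum_comm]
      refine Finset.sum_congr rfl fun i _ => Finset.sum_congr rfl fun j _ => ?_
      rw [hWsymm j i, real_inner_comm]
    · congr 1
      refine Finset.sum_congr rfl fun i _ => ?_
      rw [hHsym i (x i) (u i) (v i), real_inner_comm]
  -- quadratic bounds
  have hquad : ∀ x v, (lmin - α * L) * ‖v‖ ^ 2 ≤ ⟪A x v, v⟫ ∧
      ⟪A x v, v⟫ ≤ (1 - α * μ) * ‖v‖ ^ 2 := by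
    intro x v
    have hQh_lo : μ * ∑ i, ‖v i‖ ^ 2 ≤
        ∑ i, ⟪fderiv ℝ (gradient (f i)) (x i) (v i), v i⟫ := by
      rw [Finset.mul_sum]
      exact Finset.sum_le_sum fun i _ => (hHess i (x i) (v i)).1
    have hQh_hi : ∑ i, ⟪fderiv ℝ (gradient (f i)) (x i) (v i), v i⟫ ≤
        L * ∑ i, ‖v i‖ ^ 2 := by
      rw [Finset.mul_sum]
      exact Finset.sum_le_sum fun i _ => (hHess i (x i) (v i)).2
    have hQw_hi : ∑ i, ∑ j, W i j * ⟪v j, v i⟫ ≤ ∑ i, ‖v i‖ ^ 2 := by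
      have step : ∑ i, ∑ j, W i j * ⟪v j, v i⟫ ≤ ∑ i, ∑ j, W i j * (‖v j‖ * ‖v i‖) := by
        refine Finset.sum_le_sum fun i _ => Finset.sum_le_sum fun j _ => ?_
        exact mul_le_mul_of_nonneg_left (real_inner_le_norm _ _) (hWnn i j)
      exact step.trans (aux_quad_upper W hWnn hWrow hWcol fun i => ‖v i‖)
    have hQw_lo : lmin * ∑ i, ‖v i‖ ^ 2 ≤ ∑ i, ∑ j, W i j * ⟪v j, v i⟫ := by
      have expand : ∀ i j : Fin N, ⟪v j, v i⟫ = ∑ c, v j c * v i c := by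
        intro i j
        rw [PiLp.inner_apply]
        simp [RCLike.inner_apply]
        exact Finset.sum_congr rfl fun c _ => mul_comm _ _
      have swap : ∑ i, ∑ j, W i j * ⟪v j, v i⟫
          = ∑ c, ∑ i, ∑ j, W i j * v j c * v i c := by
        calc ∑ i, ∑ j, W i j * ⟪v j, v i⟫
            = ∑ i, ∑ j, ∑ c, W i j * v j c * v i c := by
              refine Finset.sum_congr rfl fun i _ => Finset.sum_congr rfl fun j _ => ?_
              rw [expand i j, Finset.mul_sum]
              exact Finset.sum_congr rfl fun c _ => by ring
          _ = ∑ i, ∑ c, ∑ j, W i j * v j c * v i c :=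
              Finset.sum_congr rfl fun i _ => Finset.sum_comm
          _ = ∑ c, ∑ i, ∑ j, W i j * v j c * v i c := Finset.sum_comm
      have percoord : ∀ c : Fin n, lmin * ∑ i, (v i c) ^ 2 ≤
          ∑ i, ∑ j, W i j * v j c * v i c := fun c =>
        aux_quad_lower W hW (fun i => v i c)
      have normsplit : ∑ i, ‖v i‖ ^ 2 = ∑ c, ∑ i, (v i c) ^ 2 := by
        rw [Finset.sum_comm]
        refine Finset.sum_congr rfl fun i _ => ?_
        rw [← real_inner_self_eq_norm_sq, PiLp.inner_apply]
        simp [RCLike.inner_apply, pow_two]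
      rw [swap, normsplit, Finset.mul_sum]
      exact Finset.sum_le_sum fun c _ => percoord c
    have hAvv := hinnerA x v v
    constructor
    · rw [hAvv, hnormsq]
      nlinarith [hQw_lo, hQh_hi]
    · rw [hAvv, hnormsq]
      nlinarith [hQw_hi, hQh_lo]
  -- lmin ≤ 1 is not even needed; abs bound directly
  have hquadabs : ∀ x v, |⟪A x v, v⟫| ≤ ζ'' * ‖v‖ ^ 2 := by
    intro x v
    have h1 := (hquad x v).1
    have h2 := (hquad x v).2
    have hb : |1 - α * μ| ≤ ζ'' := hζ'' ▸ le_max_left _ _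
    have ha : |lmin - α * L| ≤ ζ'' := hζ'' ▸ le_max_right _ _
    have hv2 : (0:ℝ) ≤ ‖v‖ ^ 2 := by positivity
    rw [abs_le]
    constructor
    · have : -ζ'' ≤ lmin - α * L := by
        have := neg_abs_le (lmin - α * L)
        linarith
      nlinarith
    · have : 1 - α * μ ≤ ζ'' := le_trans (le_abs_self _) hb
      nlinarith
  have hAnorm : ∀ x, ‖A x‖ ≤ ζ'' := fun x =>
    aux_opnorm_le (A x) ζ'' hζnn (hsymA x) (hquadabs x)
  -- Lipschitz estimate
  have hlip : ∀ a b, ‖T b - T a‖ ≤ ζ'' * ‖b - a‖ := by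
    intro a b
    letI : ContinuousSMul ℝ (PiLp 2 fun _ : Fin N => EuclideanSpace ℝ (Fin n)) := inferInstance
    refine convex_univ.norm_image_sub_le_of_norm_fderiv_le
      (fun x _ => (hDeriv x).differentiableAt) (fun x _ => ?_) trivial trivial
    rw [(hDeriv x).fderiv]
    exact hAnorm x
  have hLip : LipschitzWith ζ''.toNNReal T := by
    refine LipschitzWith.of_dist_le_mul fun a b => ?_
    rw [dist_eq_norm, dist_eq_norm, Real.coe_toNNReal _ hζnn]
    exact hlip b a
  have hcontr : ContractingWith ζ''.toNNReal T := by
    refine ⟨?_, hLip⟩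
    rw [← Real.toNNReal_one]
    exact (Real.toNNReal_lt_toNNReal_iff one_pos).2 hζlt
  have hfix : T (ContractingWith.fixedPoint T hcontr) = ContractingWith.fixedPoint T hcontr :=
    hcontr.fixedPoint_isFixedPt
  refine ⟨ContractingWith.fixedPoint T hcontr, hfix, fun y hy => hcontr.fixedPoint_unique hy, ?_⟩
  intro z hz k
  induction k with
  | zero => simp
  | succ k ih =>
    have h1 : ‖z (k + 1) - ContractingWith.fixedPoint T hcontr‖ ≤
        ζ'' * ‖z k - ContractingWith.fixedPoint T hcontr‖ := by
      have h := hlip (ContractingWith.fixedPoint T hcontr) (z k)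
      rw [hfix] at h
      rw [hz k]
      exact h
    calc ‖z (k + 1) - ContractingWith.fixedPoint T hcontr‖
        ≤ ζ'' * ‖z k - ContractingWith.fixedPoint T hcontr‖ := h1
      _ ≤ ζ'' * (ζ'' ^ k * ‖z 0 - ContractingWith.fixedPoint T hcontr‖) :=
          mul_le_mul_of_nonneg_left ih hζnn
      _ = ζ'' ^ (k + 1) * ‖z 0 - ContractingWith.fixedPoint T hcontr‖ := by ring
end

section
/- (Theorem 1, FJ-DGD-2 convergence.) Let f_1, ..., f_N : ℝ^n → ℝ be twice continuously differentiable with symmetric Hessians whose eigenvalues all lie in [μ, L], 0 < μ ≤ L; let W be a real symmetric doubly stochastic N × N matrix with smallest eigenvalue λ_min(W); let α > 0; and set ζ = max{|1 − αμ|, |1 − αL|, |λ_min(W) − αL|}, assuming ζ < 1. Let x_i* be the unique minimizer of f_i and x* = (x_1*, ..., x_N*) ∈ (ℝ^n)^N, and let x̄ ∈ (ℝ^n)^N be the unique fixed point of the DGD map T(z)_i = ∑_j W_{ij} z_j − α∇f_i(z_i). Let Λ act on (ℝ^n)^N by (Λv)_i = λ_i v_i with λ_i ∈ [0,1] for all i.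 Define, from a common initial point y_0 = z_0 = x_0 ∈ (ℝ^n)^N, the iterations y_{k+1,i} = y_{k,i} − α∇f_i(y_{k,i}), z_{k+1} = T(z_k), and x_k = Λ y_k + (I − Λ) z_k. Then for every k ≥ 0, ‖x_k − (Λx* + (I − Λ)x̄)‖ ≤ ζ^k (‖x_0 − x*‖ + ‖x_0 − x̄‖). In particular, the FJ-DGD-2 iterates x_k converge linearly, at rate ζ, to Λx* + (I − Λ)x̄. -/
open scoped RealInnerProductSpace Matrix



lemma W_quad_upper {N : ℕ} [NeZero N] (W : Matrix (Fin N) (Fin N) ℝ)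
    (hWnn : ∀ i j, 0 ≤ W i j)
    (hWrow : ∀ i, ∑ j, W i j = 1)
    (hWcol : ∀ j, ∑ i, W i j = 1)
    (x : EuclideanSpace ℝ (Fin N)) :
    ⟪x, (WithLp.equiv 2 (Fin N → ℝ)).symm (W *ᵥ x)⟫ ≤ ‖x‖ ^ 2 := by
  have hnorm : ‖x‖ ^ 2 = ∑ i, x i ^ 2 := by
    rw [← real_inner_self_eq_norm_sq, PiLp.inner_apply]
    simp [RCLike.inner_apply, sq]
  have hinner : ⟪x, (WithLp.equiv 2 (Fin N → ℝ)).symm (W *ᵥ x)⟫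
      = ∑ i, ∑ j, W i j * (x i * x j) := by
    rw [PiLp.inner_apply]
    simp only [RCLike.inner_apply, conj_trivial, WithLp.equiv_symm_apply, PiLp.toLp_apply,
      Matrix.mulVec, dotProduct, Finset.mul_sum]
    apply Finset.sum_congr rfl; intro i _; rw [Finset.sum_mul]; apply Finset.sum_congr rfl; intro j _; ring
  rw [hinner, hnorm]
  have step : ∀ i j, W i j * (x i * x j) ≤ W i j * ((x i ^ 2 + x j ^ 2) / 2) := by
    intro i j
    apply mul_le_mul_of_nonneg_left _ (hWnn i j)
    nlinarith [sq_nonneg (x i - x j)]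
  calc ∑ i, ∑ j, W i j * (x i * x j)
      ≤ ∑ i, ∑ j, W i j * ((x i ^ 2 + x j ^ 2) / 2) := by
        apply Finset.sum_le_sum; intro i _
        exact Finset.sum_le_sum fun j _ => step i j
    _ = (∑ i, ∑ j, W i j * x i ^ 2) / 2 + (∑ i, ∑ j, W i j * x j ^ 2) / 2 := by
        rw [Finset.sum_div, Finset.sum_div, ← Finset.sum_add_distrib]
        apply Finset.sum_congr rfl; intro i _
        rw [Finset.sum_div, Finset.sum_div, ← Finset.sum_add_distrib]
        apply Finset.sum_congr rfl; intro j _; ring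
    _ = ∑ i, x i ^ 2 := by
        have h1 : ∑ i, ∑ j, W i j * x i ^ 2 = ∑ i, x i ^ 2 := by
          apply Finset.sum_congr rfl; intro i _
          rw [← Finset.sum_mul, hWrow, one_mul]
        have h2 : ∑ i, ∑ j, W i j * x j ^ 2 = ∑ j, x j ^ 2 := by
          rw [Finset.sum_comm]
          apply Finset.sum_congr rfl; intro j _
          rw [← Finset.sum_mul, hWcol, one_mul]
        rw [h1, h2]; ring

lemma W_quad_lower {N : ℕ} [NeZero N] (W : Matrix (Fin N) (Fin N) ℝ)
    (hW : W.IsHermitian) (x : EuclideanSpace ℝ (Fin N)) :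
    (Finset.univ.inf' Finset.univ_nonempty hW.eigenvalues) * ‖x‖ ^ 2 ≤
      ⟪x, (WithLp.equiv 2 (Fin N → ℝ)).symm (W *ᵥ x)⟫ := by
  set e := hW.eigenvectorBasis
  set lam := hW.eigenvalues
  set m := Finset.univ.inf' Finset.univ_nonempty hW.eigenvalues with hm
  set y : EuclideanSpace ℝ (Fin N) := (WithLp.equiv 2 (Fin N → ℝ)).symm (W *ᵥ x) with hy
  have key : ∀ i : Fin N, ⟪e i, y⟫ = lam i * ⟪e i, x⟫ := by
    intro i
    have hm2 : W *ᵥ ⇑(e i) = lam i • ⇑(e i) := hW.mulVec_eigenvectorBasis i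
    -- symmetry of W as a bilinear form
    have hsym : ⟪e i, y⟫ = ⟪(WithLp.equiv 2 (Fin N → ℝ)).symm (W *ᵥ ⇑(e i)), x⟫ := by
      rw [hy]
      simp only [PiLp.inner_apply, RCLike.inner_apply, conj_trivial,
        WithLp.equiv_symm_apply, PiLp.toLp_apply, Matrix.mulVec, dotProduct]
      rw [Finset.sum_congr rfl fun k _ => mul_comm (∑ t, W k t * x t) (e i k),
        Finset.sum_congr rfl fun k _ => mul_comm (x k) (∑ t, W k t * e i t)]
      have hWs : ∀ a b, W a b = W b a := by
        intro a b
        have := congrFun (congrFun hW b) a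
        simpa [Matrix.conjTranspose_apply] using this
      calc ∑ k, e i k * ∑ t, W k t * x t
          = ∑ k, ∑ t, e i k * (W k t * x t) := by
            apply Finset.sum_congr rfl; intro k _; rw [Finset.mul_sum]
        _ = ∑ t, ∑ k, e i k * (W k t * x t) := Finset.sum_comm
        _ = ∑ t, (∑ k, W t k * e i k) * x t := by
            apply Finset.sum_congr rfl; intro t _
            rw [Finset.sum_mul]
            apply Finset.sum_congr rfl; intro k _
            rw [hWs t k]; ring
    rw [hsym, hm2]
    simp only [PiLp.inner_apply, RCLike.inner_apply, conj_trivial,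
      WithLp.equiv_symm_apply, PiLp.toLp_apply, WithLp.equiv_apply, Pi.smul_apply,
      smul_eq_mul, Finset.mul_sum]
    apply Finset.sum_congr rfl; intro j _; ring
  have parseval : ∑ i, ⟪x, e i⟫ * ⟪e i, x⟫ = ‖x‖ ^ 2 := by
    rw [e.sum_inner_mul_inner x x, real_inner_self_eq_norm_sq]
  have hexp : ⟪x, y⟫ = ∑ i, lam i * (⟪e i, x⟫ * ⟪e i, x⟫) := by
    rw [← e.sum_inner_mul_inner x y]
    apply Finset.sum_congr rfl; intro i _
    rw [key i, real_inner_comm x (e i)]; ring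
  rw [hexp]
  have : m * ‖x‖ ^ 2 = ∑ i, m * (⟪e i, x⟫ * ⟪e i, x⟫) := by
    rw [← Finset.mul_sum]
    congr 1
    rw [← parseval]
    apply Finset.sum_congr rfl; intro i _; rw [real_inner_comm x (e i)]
  rw [this]
  apply Finset.sum_le_sum; intro i _
  apply mul_le_mul_of_nonneg_right (Finset.inf'_le _ (Finset.mem_univ i))
  exact mul_self_nonneg _


lemma sym_op_norm_bound {E : Type*} [NormedAddCommGroup E] [InnerProductSpace ℝ E]
    (B : E → E) (hadd : ∀ u v, B (u + v) = B u + B v)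
    (hsmul : ∀ (c : ℝ) u, B (c • u) = c • B u)
    (c : ℝ) (hc : 0 ≤ c)
    (hsym : ∀ u v, ⟪B u, v⟫ = ⟪u, B v⟫)
    (hq : ∀ v, |⟪B v, v⟫| ≤ c * ‖v‖ ^ 2) (u : E) : ‖B u‖ ≤ c * ‖u‖ := by
  rcases eq_or_ne (B u) 0 with h0 | h0
  · simp [h0]; positivity
  rcases eq_or_ne u 0 with hu | hu
  · exfalso; apply h0
    have := hsmul 0 0
    simp at this
    rw [hu]; simpa using this
  set v : E := (‖u‖ / ‖B u‖) • B u with hv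
  have hnv : ‖v‖ = ‖u‖ := by
    have hne : ‖B u‖ ≠ 0 := norm_ne_zero_iff.2 h0
    rw [hv, norm_smul, Real.norm_eq_abs, abs_of_nonneg (by positivity),
      div_mul_cancel₀ _ hne]
  have hBuv : ⟪B u, v⟫ = ‖u‖ * ‖B u‖ := by
    rw [hv, real_inner_smul_right, real_inner_self_eq_norm_sq]
    have : ‖B u‖ ≠ 0 := norm_ne_zero_iff.2 h0
    field_simp
  have hpol : ⟪B (u + v), u + v⟫ - ⟪B (u - v), u - v⟫ = 4 * ⟪B u, v⟫ := by
    have h1 : B (u + v) = B u + B v := hadd u v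
    have h2 : B (u - v) = B u - B v := by
      have := hadd (u - v) v; simp at this
      rw [eq_sub_iff_add_eq, ← this]
    rw [h1, h2]
    simp only [inner_add_left, inner_add_right, inner_sub_left, inner_sub_right]
    have h3 : ⟪B v, u⟫ = ⟪B u, v⟫ := by
      rw [hsym v u, real_inner_comm]
    linarith
  have hb1 := hq (u + v)
  have hb2 := hq (u - v)
  have hpar : ‖u + v‖ ^ 2 + ‖u - v‖ ^ 2 = 2 * ‖u‖ ^ 2 + 2 * ‖v‖ ^ 2 := by
    have := parallelogram_law_with_norm ℝ u v
    nlinarith [this]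
  have key : 4 * (‖u‖ * ‖B u‖) ≤ 4 * (c * ‖u‖ ^ 2) := by
    rw [← hBuv, ← hpol]
    have : |⟪B (u+v), u+v⟫ - ⟪B (u-v), u-v⟫| ≤ c * ‖u+v‖^2 + c * ‖u-v‖^2 := by
      calc |⟪B (u+v), u+v⟫ - ⟪B (u-v), u-v⟫| ≤ |⟪B (u+v), u+v⟫| + |⟪B (u-v), u-v⟫| := abs_sub _ _
        _ ≤ _ := add_le_add hb1 hb2
    have h4 : c * ‖u+v‖^2 + c * ‖u-v‖^2 = c * (2 * ‖u‖^2 + 2 * ‖v‖^2) := by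
      rw [← mul_add, hpar]
    rw [hnv] at h4
    calc ⟪B (u+v), u+v⟫ - ⟪B (u-v), u-v⟫ ≤ |⟪B (u+v), u+v⟫ - ⟪B (u-v), u-v⟫| := le_abs_self _
      _ ≤ c * ‖u+v‖^2 + c * ‖u-v‖^2 := this
      _ = 4 * (c * ‖u‖^2) := by rw [h4]; ring
  have hupos : 0 < ‖u‖ := norm_pos_iff.2 hu
  nlinarith [key]

lemma step_contract {n N : ℕ}
    (f : Fin N → EuclideanSpace ℝ (Fin n) → ℝ) (μ L α : ℝ) (hα : 0 ≤ α)
    (hC2 : ∀ i, ContDiff ℝ 2 (f i))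
    (hHsym : ∀ i x u v, ⟪fderiv ℝ (gradient (f i)) x u, v⟫ =
      ⟪u, fderiv ℝ (gradient (f i)) x v⟫)
    (hHess : ∀ i x v, μ * ‖v‖ ^ 2 ≤ ⟪fderiv ℝ (gradient (f i)) x v, v⟫ ∧
      ⟪fderiv ℝ (gradient (f i)) x v, v⟫ ≤ L * ‖v‖ ^ 2)
    (m₀ ζ : ℝ)
    (M : (PiLp 2 fun _ : Fin N => EuclideanSpace ℝ (Fin n)) →L[ℝ]
         (PiLp 2 fun _ : Fin N => EuclideanSpace ℝ (Fin n)))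
    (hMsym : ∀ u v, ⟪M u, v⟫ = ⟪u, M v⟫)
    (hMlow : ∀ v, m₀ * ‖v‖ ^ 2 ≤ ⟪M v, v⟫)
    (hMhigh : ∀ v, ⟪M v, v⟫ ≤ ‖v‖ ^ 2)
    (hζ0 : 0 ≤ ζ) (hζ1 : 1 - α * μ ≤ ζ) (hζ2 : α * L - m₀ ≤ ζ)
    (u v : PiLp 2 fun _ : Fin N => EuclideanSpace ℝ (Fin n)) :
    ‖(M u - α • (WithLp.equiv 2 (∀ _ : Fin N, EuclideanSpace ℝ (Fin n))).symm
        (fun i => gradient (f i) (u i))) -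
      (M v - α • (WithLp.equiv 2 (∀ _ : Fin N, EuclideanSpace ℝ (Fin n))).symm
        (fun i => gradient (f i) (v i)))‖ ≤ ζ * ‖u - v‖ := by
  classical
  have hgradC : ∀ i, ContDiff ℝ 1 (gradient (f i)) := by
    intro i
    have h1 : ContDiff ℝ 1 (fderiv ℝ (f i)) := (hC2 i).fderiv_right (by norm_num)
    have h2 : gradient (f i) = fun x =>
        (InnerProductSpace.toDual ℝ (EuclideanSpace ℝ (Fin n))).symm (fderiv ℝ (f i) x) := rfl
    rw [h2]
    exact (InnerProductSpace.toDual ℝ (EuclideanSpace ℝ (Fin n))).symm.contDiff.comp h1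
  have hdiff : ∀ i (w : EuclideanSpace ℝ (Fin n)), HasFDerivAt (gradient (f i))
      (fderiv ℝ (gradient (f i)) w) w := fun i w =>
    (((hgradC i).differentiable one_ne_zero) w).hasFDerivAt
  set iso : (PiLp 2 fun _ : Fin N => EuclideanSpace ℝ (Fin n)) ≃L[ℝ]
      (∀ _ : Fin N, EuclideanSpace ℝ (Fin n)) := PiLp.continuousLinearEquiv 2 ℝ _ with hiso
  set D : (PiLp 2 fun _ : Fin N => EuclideanSpace ℝ (Fin n)) →
      ((PiLp 2 fun _ : Fin N => EuclideanSpace ℝ (Fin n)) →L[ℝ]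
       (PiLp 2 fun _ : Fin N => EuclideanSpace ℝ (Fin n))) := fun w =>
    (↑iso.symm : _ →L[ℝ] _).comp
      ((ContinuousLinearMap.pi fun i => (fderiv ℝ (gradient (f i)) (w i)).comp
          (ContinuousLinearMap.proj i)).comp (↑iso : _ →L[ℝ] _)) with hD
  have hDapp : ∀ (w p : PiLp 2 fun _ : Fin N => EuclideanSpace ℝ (Fin n)) (i : Fin N),
      (D w p) i = fderiv ℝ (gradient (f i)) (w i) (p i) := fun w p i => rfl
  have hGw : ∀ w, HasFDerivAt
      (fun w : PiLp 2 fun _ : Fin N => EuclideanSpace ℝ (Fin n) =>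
        (WithLp.equiv 2 (∀ _ : Fin N, EuclideanSpace ℝ (Fin n))).symm
          (fun i => gradient (f i) (w i))) (D w) w := by
    intro w
    have hG' : HasFDerivAt
        (fun p : ∀ _ : Fin N, EuclideanSpace ℝ (Fin n) => fun i => gradient (f i) (p i))
        (ContinuousLinearMap.pi fun i => (fderiv ℝ (gradient (f i)) ((iso w) i)).comp
          (ContinuousLinearMap.proj i)) (iso w) := by
      apply hasFDerivAt_pi''
      intro i
      rw [ContinuousLinearMap.proj_pi]
      exact (hdiff i ((iso w) i)).comp (iso w) (hasFDerivAt_apply (𝕜 := ℝ) i (iso w))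
    exact iso.symm.hasFDerivAt.comp _ (hG'.comp w iso.hasFDerivAt)
  have hTw : ∀ w, HasFDerivAt
      (fun w : PiLp 2 fun _ : Fin N => EuclideanSpace ℝ (Fin n) =>
        M w - α • (WithLp.equiv 2 (∀ _ : Fin N, EuclideanSpace ℝ (Fin n))).symm
          (fun i => gradient (f i) (w i))) (M - α • D w) w := fun w =>
    (M.hasFDerivAt).sub ((hGw w).const_smul α)
  have hbound : ∀ w, ‖M - α • D w‖ ≤ ζ := by
    intro w
    apply ContinuousLinearMap.opNorm_le_bound _ hζ0
    intro p
    have hDinner : ∀ p q : PiLp 2 fun _ : Fin N => EuclideanSpace ℝ (Fin n),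
        ⟪D w p, q⟫ = ∑ i, ⟪fderiv ℝ (gradient (f i)) (w i) (p i), q i⟫ := by
      intro p q
      rw [PiLp.inner_apply]
      apply Finset.sum_congr rfl; intro i _
      rw [hDapp]
    have hDsym : ∀ p q : PiLp 2 fun _ : Fin N => EuclideanSpace ℝ (Fin n),
        ⟪D w p, q⟫ = ⟪p, D w q⟫ := by
      intro p q
      rw [hDinner]
      conv_rhs => rw [PiLp.inner_apply]
      apply Finset.sum_congr rfl; intro i _
      rw [hDapp]
      exact hHsym i (w i) (p i) (q i)
    have hsym : ∀ p q : PiLp 2 fun _ : Fin N => EuclideanSpace ℝ (Fin n),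
        ⟪(M - α • D w) p, q⟫ = ⟪p, (M - α • D w) q⟫ := by
      intro p q
      simp only [ContinuousLinearMap.sub_apply, ContinuousLinearMap.smul_apply,
        inner_sub_left, inner_sub_right, real_inner_smul_left, real_inner_smul_right]
      rw [hMsym, hDsym]
    have hquad : ∀ p : PiLp 2 fun _ : Fin N => EuclideanSpace ℝ (Fin n),
        |⟪(M - α • D w) p, p⟫| ≤ ζ * ‖p‖ ^ 2 := by
      intro p
      have hexp : ⟪(M - α • D w) p, p⟫ =
          ⟪M p, p⟫ - α * ∑ i, ⟪fderiv ℝ (gradient (f i)) (w i) (p i), p i⟫ := by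
        simp only [ContinuousLinearMap.sub_apply, ContinuousLinearMap.smul_apply,
          inner_sub_left, real_inner_smul_left]
        rw [hDinner]
      have hnormsq : ‖p‖ ^ 2 = ∑ i, ‖p i‖ ^ 2 := PiLp.norm_sq_eq_of_L2 _ p
      have hsumlow : μ * ‖p‖ ^ 2 ≤ ∑ i, ⟪fderiv ℝ (gradient (f i)) (w i) (p i), p i⟫ := by
        rw [hnormsq, Finset.mul_sum]
        exact Finset.sum_le_sum fun i _ => (hHess i (w i) (p i)).1
      have hsumhigh : ∑ i, ⟪fderiv ℝ (gradient (f i)) (w i) (p i), p i⟫ ≤ L * ‖p‖ ^ 2 := by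
        rw [hnormsq, Finset.mul_sum]
        exact Finset.sum_le_sum fun i _ => (hHess i (w i) (p i)).2
      rw [hexp, abs_le]
      have hp2 : (0:ℝ) ≤ ‖p‖ ^ 2 := sq_nonneg _
      constructor
      · nlinarith [hMlow p, mul_le_mul_of_nonneg_left hsumhigh hα]
      · nlinarith [hMhigh p, mul_le_mul_of_nonneg_left hsumlow hα]
    exact sym_op_norm_bound _ (map_add _) (map_smul _) ζ hζ0 hsym hquad p
  have := convex_univ.norm_image_sub_le_of_norm_hasFDerivWithin_le
    (f' := fun w => M - α • D w) (C := ζ)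
    (fun w _ => (hTw w).hasFDerivWithinAt) (fun w _ => hbound w)
    (Set.mem_univ v) (Set.mem_univ u)
  simpa using this


set_option maxHeartbeats 1000000 in

/-- Theorem 1, FJ-DGD-2 convergence: the FJ-DGD-2 iterates
`x_k = Λ y_k + (I − Λ) z_k` converge linearly, at rate
`ζ = max {|1 − αμ|, |1 − αL|, |λmin(W) − αL|}`, to `Λx* + (I − Λ)x̄`. -/
theorem stmt6 {n N : ℕ} [NeZero N]
    (f : Fin N → EuclideanSpace ℝ (Fin n) → ℝ) (μ L α : ℝ)
    (hμ : 0 < μ) (hμL : μ ≤ L) (hα : 0 < α)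
    (hC2 : ∀ i, ContDiff ℝ 2 (f i))
    (hHsym : ∀ i x u v, ⟪fderiv ℝ (gradient (f i)) x u, v⟫ =
      ⟪u, fderiv ℝ (gradient (f i)) x v⟫)
    (hHess : ∀ i x v, μ * ‖v‖ ^ 2 ≤ ⟪fderiv ℝ (gradient (f i)) x v, v⟫ ∧
      ⟪fderiv ℝ (gradient (f i)) x v, v⟫ ≤ L * ‖v‖ ^ 2)
    (W : Matrix (Fin N) (Fin N) ℝ) (hW : W.IsHermitian)
    (hWnn : ∀ i j, 0 ≤ W i j)
    (hWrow : ∀ i, ∑ j, W i j = 1)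
    (hWcol : ∀ j, ∑ i, W i j = 1)
    (ζ : ℝ)
    (hζ : ζ = max (max |1 - α * μ| |1 - α * L|)
      |Finset.univ.inf' Finset.univ_nonempty hW.eigenvalues - α * L|)
    (hζlt : ζ < 1)
    -- `xstar` stacks the unique local minimizers `x_i*` of the `f i`
    (xstar : PiLp 2 fun _ : Fin N => EuclideanSpace ℝ (Fin n))
    (hxstar : ∀ i x, f i (xstar i) ≤ f i x)
    -- `xbar` is the (unique) fixed point of the DGD map
    (xbar : PiLp 2 fun _ : Fin N => EuclideanSpace ℝ (Fin n))
    (hxbar : ∀ i, xbar i = ∑ j, W i j • xbar j - α • gradient (f i) (xbar i))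
    -- Friedkin-Johnsen stubbornness parameters
    (l : Fin N → ℝ) (hl : ∀ i, l i ∈ Set.Icc (0 : ℝ) 1)
    -- the FJ-DGD-2 iterations from a common initial point `x0`
    (x0 : PiLp 2 fun _ : Fin N => EuclideanSpace ℝ (Fin n))
    (y z x : ℕ → PiLp 2 fun _ : Fin N => EuclideanSpace ℝ (Fin n))
    (hy0 : y 0 = x0) (hz0 : z 0 = x0)
    (hy : ∀ k i, y (k + 1) i = y k i - α • gradient (f i) (y k i))
    (hz : ∀ k i, z (k + 1) i = ∑ j, W i j • z k j - α • gradient (f i) (z k i))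
    (hx : ∀ k i, x k i = l i • y k i + (1 - l i) • z k i)
    -- `xhat = Λ x* + (I − Λ) x̄`
    (xhat : PiLp 2 fun _ : Fin N => EuclideanSpace ℝ (Fin n))
    (hxhat : ∀ i, xhat i = l i • xstar i + (1 - l i) • xbar i) :
    ∀ k, ‖x k - xhat‖ ≤ ζ ^ k * (‖x0 - xstar‖ + ‖x0 - xbar‖) := by
  classical
  set lmin : ℝ := Finset.univ.inf' Finset.univ_nonempty hW.eigenvalues with hlmin
  have hζ0 : 0 ≤ ζ := by
    rw [hζ]
    have : (0:ℝ) ≤ |1 - α * μ| := abs_nonneg _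
    exact le_trans this (le_trans (le_max_left _ _) (le_max_left _ _))
  have hζa : 1 - α * μ ≤ ζ := by
    rw [hζ]
    exact le_trans (le_abs_self _) (le_trans (le_max_left _ _) (le_max_left _ _))
  have hζb : α * L - 1 ≤ ζ := by
    rw [hζ]
    have : α * L - 1 ≤ |1 - α * L| := by
      rw [abs_sub_comm]; exact le_abs_self _
    exact le_trans this (le_trans (le_max_right _ _) (le_max_left _ _))
  have hζc : α * L - lmin ≤ ζ := by
    rw [hζ]
    have : α * L - lmin ≤ |lmin - α * L| := by
      rw [abs_sub_comm]; exact le_abs_self _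
    exact le_trans this (le_max_right _ _)
  -- gradient vanishes at the minimizers
  have hgrad0 : ∀ i, gradient (f i) (xstar i) = 0 := by
    intro i
    have hmin : IsLocalMin (f i) (xstar i) := Filter.Eventually.of_forall (fun x => hxstar i x)
    have : gradient (f i) (xstar i) =
        (InnerProductSpace.toDual ℝ (EuclideanSpace ℝ (Fin n))).symm
          (fderiv ℝ (f i) (xstar i)) := rfl
    rw [this, hmin.fderiv_eq_zero, map_zero]
  -- the identity map as M
  have hScontract : ∀ u v : PiLp 2 fun _ : Fin N => EuclideanSpace ℝ (Fin n),
      ‖(u - α • (WithLp.equiv 2 (∀ _ : Fin N, EuclideanSpace ℝ (Fin n))).symm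
          (fun i => gradient (f i) (u i))) -
        (v - α • (WithLp.equiv 2 (∀ _ : Fin N, EuclideanSpace ℝ (Fin n))).symm
          (fun i => gradient (f i) (v i)))‖ ≤ ζ * ‖u - v‖ := by
    intro u v
    have := step_contract f μ L α hα.le hC2 hHsym hHess 1 ζ
      (ContinuousLinearMap.id ℝ _)
      (fun u v => rfl)
      (fun v => by rw [ContinuousLinearMap.id_apply, real_inner_self_eq_norm_sq, one_mul])
      (fun v => by rw [ContinuousLinearMap.id_apply, real_inner_self_eq_norm_sq])
      hζ0 hζa (by linarith) u v
    simpa using this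
  -- the averaging matrix as M
  set iso : (PiLp 2 fun _ : Fin N => EuclideanSpace ℝ (Fin n)) ≃L[ℝ]
      (∀ _ : Fin N, EuclideanSpace ℝ (Fin n)) := PiLp.continuousLinearEquiv 2 ℝ _ with hiso
  set MW : (PiLp 2 fun _ : Fin N => EuclideanSpace ℝ (Fin n)) →L[ℝ]
      (PiLp 2 fun _ : Fin N => EuclideanSpace ℝ (Fin n)) :=
    (iso.symm.toContinuousLinearMap).comp
      (ContinuousLinearMap.pi fun i => ∑ j, W i j •
        ((ContinuousLinearMap.proj (R := ℝ)
            (φ := fun _ : Fin N => EuclideanSpace ℝ (Fin n)) j).comp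
          (iso.toContinuousLinearMap))) with hMW
  have hMWapp : ∀ (v : PiLp 2 fun _ : Fin N => EuclideanSpace ℝ (Fin n)) (i : Fin N),
      MW v i = ∑ j, W i j • v j := by
    intro v i
    show (ContinuousLinearMap.pi fun i => ∑ j, W i j •
        ((ContinuousLinearMap.proj (R := ℝ)
            (φ := fun _ : Fin N => EuclideanSpace ℝ (Fin n)) j).comp
          (iso.toContinuousLinearMap))) v i = _
    rw [ContinuousLinearMap.pi_apply, ContinuousLinearMap.sum_apply]
    rfl
  have hMWinner : ∀ (u v : PiLp 2 fun _ : Fin N => EuclideanSpace ℝ (Fin n)),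
      ⟪MW u, v⟫ = ∑ i, ∑ j, W i j * ⟪u j, v i⟫ := by
    intro u v
    rw [PiLp.inner_apply]
    apply Finset.sum_congr rfl; intro i _
    rw [hMWapp, sum_inner]
    apply Finset.sum_congr rfl; intro j _
    rw [real_inner_smul_left]
  have hWs : ∀ a b, W a b = W b a := by
    intro a b
    have := congrFun (congrFun hW b) a
    simpa [Matrix.conjTranspose_apply] using this
  have hMWsym : ∀ u v : PiLp 2 fun _ : Fin N => EuclideanSpace ℝ (Fin n),
      ⟪MW u, v⟫ = ⟪u, MW v⟫ := by
    intro u v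
    rw [hMWinner, real_inner_comm, hMWinner]
    rw [Finset.sum_comm]
    apply Finset.sum_congr rfl; intro i _
    apply Finset.sum_congr rfl; intro j _
    rw [hWs i j, real_inner_comm]
  -- relate the PiLp quadratic form to coordinatewise matrix quadratic forms
  have hMWquad : ∀ v : PiLp 2 fun _ : Fin N => EuclideanSpace ℝ (Fin n),
      ⟪MW v, v⟫ = ∑ t : Fin n, ⟪(WithLp.equiv 2 (Fin N → ℝ)).symm (fun i => v i t),
        (WithLp.equiv 2 (Fin N → ℝ)).symm
          (W.mulVec ((WithLp.equiv 2 (Fin N → ℝ)).symm (fun i => v i t)))⟫ := by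
    intro v
    rw [hMWinner]
    have hpt : ∀ t : Fin n, ⟪(WithLp.equiv 2 (Fin N → ℝ)).symm (fun i => v i t),
        (WithLp.equiv 2 (Fin N → ℝ)).symm
          (W.mulVec ((WithLp.equiv 2 (Fin N → ℝ)).symm (fun i => v i t)))⟫ =
        ∑ i, ∑ j, W i j * (v i t * v j t) := by
      intro t
      simp only [PiLp.inner_apply, RCLike.inner_apply, conj_trivial,
        WithLp.equiv_symm_apply, PiLp.toLp_apply, Matrix.mulVec, dotProduct]
      apply Finset.sum_congr rfl; intro i _
      rw [Finset.sum_mul]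
      apply Finset.sum_congr rfl; intro j _; ring
    rw [Finset.sum_congr rfl (fun t _ => hpt t)]
    conv_rhs => rw [Finset.sum_comm]
    apply Finset.sum_congr rfl; intro i _
    conv_rhs => rw [Finset.sum_comm]
    apply Finset.sum_congr rfl; intro j _
    rw [PiLp.inner_apply, Finset.mul_sum]
    apply Finset.sum_congr rfl; intro t _
    simp only [RCLike.inner_apply, conj_trivial]
  have hnormsplit : ∀ v : PiLp 2 fun _ : Fin N => EuclideanSpace ℝ (Fin n),
      ‖v‖ ^ 2 = ∑ t : Fin n,
        ‖(WithLp.equiv 2 (Fin N → ℝ)).symm (fun i => v i t)‖ ^ 2 := by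
    intro v
    rw [PiLp.norm_sq_eq_of_L2]
    have : ∀ t : Fin n, ‖(WithLp.equiv 2 (Fin N → ℝ)).symm (fun i => v i t)‖ ^ 2 =
        ∑ i, (v i t) ^ 2 := by
      intro t
      rw [PiLp.norm_sq_eq_of_L2]
      apply Finset.sum_congr rfl; intro i _
      rw [WithLp.equiv_symm_apply, PiLp.toLp_apply, Real.norm_eq_abs, sq_abs]
    rw [Finset.sum_congr rfl (fun t _ => this t), Finset.sum_comm]
    apply Finset.sum_congr rfl; intro i _
    rw [PiLp.norm_sq_eq_of_L2]
    apply Finset.sum_congr rfl; intro t _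
    rw [Real.norm_eq_abs, sq_abs]
  have hMWlow : ∀ v : PiLp 2 fun _ : Fin N => EuclideanSpace ℝ (Fin n),
      lmin * ‖v‖ ^ 2 ≤ ⟪MW v, v⟫ := by
    intro v
    rw [hMWquad, hnormsplit, Finset.mul_sum]
    apply Finset.sum_le_sum; intro t _
    exact W_quad_lower W hW _
  have hMWhigh : ∀ v : PiLp 2 fun _ : Fin N => EuclideanSpace ℝ (Fin n),
      ⟪MW v, v⟫ ≤ ‖v‖ ^ 2 := by
    intro v
    rw [hMWquad, hnormsplit]
    apply Finset.sum_le_sum; intro t _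
    exact W_quad_upper W hWnn hWrow hWcol _
  have hTcontract : ∀ u v : PiLp 2 fun _ : Fin N => EuclideanSpace ℝ (Fin n),
      ‖(MW u - α • (WithLp.equiv 2 (∀ _ : Fin N, EuclideanSpace ℝ (Fin n))).symm
          (fun i => gradient (f i) (u i))) -
        (MW v - α • (WithLp.equiv 2 (∀ _ : Fin N, EuclideanSpace ℝ (Fin n))).symm
          (fun i => gradient (f i) (v i)))‖ ≤ ζ * ‖u - v‖ :=
    step_contract f μ L α hα.le hC2 hHsym hHess lmin ζ MW hMWsym hMWlow hMWhigh
      hζ0 hζa hζc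
  -- induction for y
  have hyk : ∀ k, ‖y k - xstar‖ ≤ ζ ^ k * ‖x0 - xstar‖ := by
    intro k
    induction k with
    | zero => simp [hy0]
    | succ k ih =>
      have hstep : ‖y (k+1) - xstar‖ ≤ ζ * ‖y k - xstar‖ := by
        have e1 : y (k+1) = y k - α • (WithLp.equiv 2
            (∀ _ : Fin N, EuclideanSpace ℝ (Fin n))).symm
            (fun i => gradient (f i) (y k i)) := by
          refine PiLp.ext fun i => ?_
          exact hy k i
        have e2 : xstar = xstar - α • (WithLp.equiv 2
            (∀ _ : Fin N, EuclideanSpace ℝ (Fin n))).symm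
            (fun i => gradient (f i) (xstar i)) := by
          refine PiLp.ext fun i => ?_
          show xstar i = xstar i - α • gradient (f i) (xstar i)
          rw [hgrad0 i, smul_zero, sub_zero]
        calc ‖y (k+1) - xstar‖
            = ‖(y k - α • (WithLp.equiv 2 (∀ _ : Fin N, EuclideanSpace ℝ (Fin n))).symm
                (fun i => gradient (f i) (y k i))) -
              (xstar - α • (WithLp.equiv 2 (∀ _ : Fin N, EuclideanSpace ℝ (Fin n))).symm
                (fun i => gradient (f i) (xstar i)))‖ := by rw [← e1, ← e2]
          _ ≤ ζ * ‖y k - xstar‖ := hScontract (y k) xstar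
      calc ‖y (k+1) - xstar‖ ≤ ζ * ‖y k - xstar‖ := hstep
        _ ≤ ζ * (ζ ^ k * ‖x0 - xstar‖) := by
            exact mul_le_mul_of_nonneg_left ih hζ0
        _ = ζ ^ (k+1) * ‖x0 - xstar‖ := by ring
  -- induction for z
  have hzk : ∀ k, ‖z k - xbar‖ ≤ ζ ^ k * ‖x0 - xbar‖ := by
    intro k
    induction k with
    | zero => simp [hz0]
    | succ k ih =>
      have hstep : ‖z (k+1) - xbar‖ ≤ ζ * ‖z k - xbar‖ := by
        have e1 : z (k+1) = MW (z k) - α • (WithLp.equiv 2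
            (∀ _ : Fin N, EuclideanSpace ℝ (Fin n))).symm
            (fun i => gradient (f i) (z k i)) := by
          refine PiLp.ext fun i => ?_
          show z (k+1) i = MW (z k) i - α • gradient (f i) (z k i)
          rw [hMWapp]
          exact hz k i
        have e2 : xbar = MW xbar - α • (WithLp.equiv 2
            (∀ _ : Fin N, EuclideanSpace ℝ (Fin n))).symm
            (fun i => gradient (f i) (xbar i)) := by
          refine PiLp.ext fun i => ?_
          show xbar i = MW xbar i - α • gradient (f i) (xbar i)
          rw [hMWapp]
          exact hxbar i
        calc ‖z (k+1) - xbar‖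
            = ‖(MW (z k) - α • (WithLp.equiv 2 (∀ _ : Fin N, EuclideanSpace ℝ (Fin n))).symm
                (fun i => gradient (f i) (z k i))) -
              (MW xbar - α • (WithLp.equiv 2 (∀ _ : Fin N, EuclideanSpace ℝ (Fin n))).symm
                (fun i => gradient (f i) (xbar i)))‖ := by rw [← e1, ← e2]
          _ ≤ ζ * ‖z k - xbar‖ := hTcontract (z k) xbar
      calc ‖z (k+1) - xbar‖ ≤ ζ * ‖z k - xbar‖ := hstep
        _ ≤ ζ * (ζ ^ k * ‖x0 - xbar‖) := mul_le_mul_of_nonneg_left ih hζ0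
        _ = ζ ^ (k+1) * ‖x0 - xbar‖ := by ring
  -- combine
  intro k
  set A : PiLp 2 fun _ : Fin N => EuclideanSpace ℝ (Fin n) :=
    (WithLp.equiv 2 (∀ _ : Fin N, EuclideanSpace ℝ (Fin n))).symm
      (fun i => l i • (y k i - xstar i)) with hA
  set B : PiLp 2 fun _ : Fin N => EuclideanSpace ℝ (Fin n) :=
    (WithLp.equiv 2 (∀ _ : Fin N, EuclideanSpace ℝ (Fin n))).symm
      (fun i => (1 - l i) • (z k i - xbar i)) with hB
  have hsplit : x k - xhat = A + B := by
    refine PiLp.ext fun i => ?_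
    show x k i - xhat i = l i • (y k i - xstar i) + (1 - l i) • (z k i - xbar i)
    rw [hx k i, hxhat i]
    simp only [smul_sub]
    abel
  have hAle : ‖A‖ ≤ ‖y k - xstar‖ := by
    have h1 : ‖A‖ ^ 2 ≤ ‖y k - xstar‖ ^ 2 := by
      rw [PiLp.norm_sq_eq_of_L2, PiLp.norm_sq_eq_of_L2]
      apply Finset.sum_le_sum; intro i _
      show ‖l i • (y k i - xstar i)‖ ^ 2 ≤ ‖(y k - xstar) i‖ ^ 2
      rw [norm_smul, Real.norm_eq_abs, mul_pow, sq_abs]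
      have hli := hl i
      have h2 : (l i) ^ 2 ≤ 1 := by nlinarith [hli.1, hli.2]
      have : ‖(y k - xstar) i‖ = ‖y k i - xstar i‖ := rfl
      rw [this]
      nlinarith [sq_nonneg ‖y k i - xstar i‖]
    nlinarith [norm_nonneg A, norm_nonneg (y k - xstar)]
  have hBle : ‖B‖ ≤ ‖z k - xbar‖ := by
    have h1 : ‖B‖ ^ 2 ≤ ‖z k - xbar‖ ^ 2 := by
      rw [PiLp.norm_sq_eq_of_L2, PiLp.norm_sq_eq_of_L2]
      apply Finset.sum_le_sum; intro i _
      show ‖(1 - l i) • (z k i - xbar i)‖ ^ 2 ≤ ‖(z k - xbar) i‖ ^ 2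
      rw [norm_smul, Real.norm_eq_abs, mul_pow, sq_abs]
      have hli := hl i
      have h2 : (1 - l i) ^ 2 ≤ 1 := by nlinarith [hli.1, hli.2]
      have : ‖(z k - xbar) i‖ = ‖z k i - xbar i‖ := rfl
      rw [this]
      nlinarith [sq_nonneg ‖z k i - xbar i‖]
    nlinarith [norm_nonneg B, norm_nonneg (z k - xbar)]
  calc ‖x k - xhat‖ = ‖A + B‖ := by rw [hsplit]
    _ ≤ ‖A‖ + ‖B‖ := norm_add_le A B
    _ ≤ ‖y k - xstar‖ + ‖z k - xbar‖ := add_le_add hAle hBle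
    _ ≤ ζ ^ k * ‖x0 - xstar‖ + ζ ^ k * ‖x0 - xbar‖ := add_le_add (hyk k) (hzk k)
    _ = ζ ^ k * (‖x0 - xstar‖ + ‖x0 - xbar‖) := by ring
end

section
/- (Theorem 2, FJ-DGD-N convergence with corrupted updates.) Let f_1, ..., f_N : ℝ^n → ℝ be twice continuously differentiable with symmetric Hessians whose eigenvalues all lie in [μ, L], 0 < μ ≤ L; let W be a real symmetric doubly stochastic N × N matrix with smallest eigenvalue λ_min(W); let α > 0; and set ζ = max{|1 − αμ|, |1 − αL|, |λ_min(W) − αL|}, assuming ζ < 1. Let x_i* be the unique minimizer of f_i, x* = (x_1*, ..., x_N*), and x̄ the unique fixed point of the DGD map T(z)_i = ∑_j W_{ij} z_j − α∇f_i(z_i); set x̂ = Λx* + (I − Λ)x̄, where Λ acts blockwise as (Λv)_i = λ_i v_i with λ_i ∈ [0,1]. Let (e_k) be a sequence in (ℝ^n)^N with ‖e_k‖ ≤ τ for all k. Define, from y_0 = z_0 = x_0, the iterations y_{k+1,i} = y_{k,i} − α∇f_i(y_{k,i}), z_{k+1} = T(z_k) + (W ⊗ I_n)e_k, and x_k = Λ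 y_k + (I − Λ) z_k. Then for every k ≥ 0, ‖x_k − x̂‖ ≤ ζ^k (‖x_0 − x*‖ + ‖x_0 − x̄‖) + (1 − min_i λ_i) τ ∑_{h=0}^{k−1} ζ^{k−h−1}. -/
open scoped RealInnerProductSpace

lemma aux_sym_norm {F : Type*} [NormedAddCommGroup F] [InnerProductSpace ℝ F]
    (A : F →L[ℝ] F) (c : ℝ)
    (hsym : ∀ u v : F, ⟪A u, v⟫ = ⟪u, A v⟫)
    (hb : ∀ v : F, |⟪A v, v⟫| ≤ c * ‖v‖ ^ 2) (v : F) : ‖A v‖ ≤ c * ‖v‖ := by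
  rcases eq_or_ne v 0 with rfl | hv
  · simp
  have hv0 : 0 < ‖v‖ := norm_pos_iff.mpr hv
  have hc : 0 ≤ c := by
    have h0 := (abs_nonneg _).trans (hb v)
    nlinarith [pow_pos hv0 2]
  rcases eq_or_ne (A v) 0 with h0 | hAv
  · rw [h0]; simp; positivity
  have hAv0 : 0 < ‖A v‖ := norm_pos_iff.mpr hAv
  set w := (‖v‖ / ‖A v‖) • A v with hw
  have hwn : ‖w‖ = ‖v‖ := by
    rw [hw, norm_smul, Real.norm_eq_abs, abs_of_nonneg (le_of_lt (div_pos hv0 hAv0))]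
    field_simp
  have hinner : ⟪A v, w⟫ = ‖v‖ * ‖A v‖ := by
    rw [hw, real_inner_smul_right, real_inner_self_eq_norm_mul_norm]
    field_simp
  have hsym2 : ⟪A w, v⟫ = ⟪A v, w⟫ := by rw [hsym w v, real_inner_comm]
  have hpolar : 4 * ⟪A v, w⟫ = ⟪A (v+w), v+w⟫ - ⟪A (v-w), v-w⟫ := by
    simp only [map_add, map_sub, inner_add_left, inner_add_right, inner_sub_left, inner_sub_right]
    rw [hsym2]
    ring
  have hpar2 : ‖v+w‖^2 + ‖v-w‖^2 = 2*(‖v‖^2 + ‖w‖^2) := by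
    have := parallelogram_law_with_norm ℝ v w
    nlinarith [this]
  have hle : ⟪A v, w⟫ ≤ c * ‖v‖^2 := by
    have e1 : ⟪A (v+w), v+w⟫ ≤ c * ‖v+w‖^2 := (le_abs_self _).trans (hb (v+w))
    have e2 : -(c * ‖v-w‖^2) ≤ ⟪A (v-w), v-w⟫ := by
      have := (neg_abs_le ⟪A (v-w), v-w⟫)
      nlinarith [hb (v-w)]
    have e3 : c * (‖v + w‖ ^ 2 + ‖v - w‖ ^ 2) = 4 * (c * ‖v‖ ^ 2) := by
      rw [hpar2, hwn]; ring
    nlinarith [hpolar, e1, e2, e3]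
  rw [hinner] at hle
  calc ‖A v‖ = (‖v‖ * ‖A v‖)/‖v‖ := by field_simp
  _ ≤ (c*‖v‖^2)/‖v‖ := by gcongr
  _ = c * ‖v‖ := by field_simp

lemma aux_rayleigh {N : ℕ} [NeZero N] (W : Matrix (Fin N) (Fin N) ℝ) (hW : W.IsHermitian)
    (u : EuclideanSpace ℝ (Fin N)) :
    (Finset.univ.inf' Finset.univ_nonempty hW.eigenvalues) * ‖u‖ ^ 2 ≤
      ⟪Matrix.toEuclideanLin W u, u⟫ := by
  classical
  set lam := hW.eigenvalues with hlam
  set b := hW.eigenvectorBasis with hb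
  have hTb : ∀ k, Matrix.toEuclideanLin W (b k) = lam k • b k := by
    intro k
    have h := hW.mulVec_eigenvectorBasis k
    rw [Matrix.toEuclideanLin_apply]
    exact congrArg (WithLp.equiv 2 (Fin N → ℝ)).symm h
  have expand : ⟪Matrix.toEuclideanLin W u, u⟫ = ∑ k, lam k * (b.repr u k)^2 := by
    nth_rewrite 1 [← b.sum_repr u]
    rw [map_sum, sum_inner]
    refine Finset.sum_congr rfl fun k _ => ?_
    rw [map_smul, hTb k, real_inner_smul_left, real_inner_smul_left,
      ← OrthonormalBasis.repr_apply_apply]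
    ring
  have hnorm : ‖u‖^2 = ∑ k, (b.repr u k)^2 := by
    have h1 : ‖b.repr u‖ = ‖u‖ := b.repr.norm_map u
    rw [← h1, EuclideanSpace.norm_eq, Real.sq_sqrt (by positivity)]
    simp [sq_abs]
  rw [expand, hnorm, Finset.mul_sum]
  exact Finset.sum_le_sum fun k _ =>
    mul_le_mul_of_nonneg_right (Finset.inf'_le _ (Finset.mem_univ k)) (sq_nonneg _)

lemma aux_inner_eq {N : ℕ} (u w : EuclideanSpace ℝ (Fin N)) : ⟪u, w⟫ = ∑ i, u i * w i := by
  simp [PiLp.inner_apply, RCLike.inner_apply, starRingEnd_apply, mul_comm]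

lemma aux_toEuc_apply {N : ℕ} (W : Matrix (Fin N) (Fin N) ℝ) (u : EuclideanSpace ℝ (Fin N))
    (i : Fin N) : Matrix.toEuclideanLin W u i = ∑ j, W i j * u j := by
  simp [Matrix.toEuclideanLin_apply, Matrix.mulVec, dotProduct]

lemma aux_block_low {n N : ℕ} [NeZero N] (W : Matrix (Fin N) (Fin N) ℝ) (hW : W.IsHermitian)
    (v : PiLp 2 fun _ : Fin N => EuclideanSpace ℝ (Fin n)) :
    (Finset.univ.inf' Finset.univ_nonempty hW.eigenvalues) * ‖v‖ ^ 2 ≤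
      ∑ i, ∑ j, W i j * ⟪v j, v i⟫ := by
  classical
  set lm := Finset.univ.inf' Finset.univ_nonempty hW.eigenvalues with hlm
  have hscal : ∀ u : EuclideanSpace ℝ (Fin N),
      lm * ‖u‖ ^ 2 ≤ ∑ i, ∑ j, W i j * (u j * u i) := by
    intro u
    have h := aux_rayleigh W hW u
    rw [aux_inner_eq] at h
    simp only [aux_toEuc_apply, Finset.sum_mul] at h
    convert h using 2 with i
    exact Finset.sum_congr rfl fun j _ => by ring
  set a : Fin n → EuclideanSpace ℝ (Fin N) := fun t => WithLp.toLp 2 (fun i => v i t) with ha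
  have hsum : ∑ i, ∑ j, W i j * ⟪v j, v i⟫ = ∑ t, ∑ i, ∑ j, W i j * (a t j * a t i) := by
    have h1 : ∀ i j, W i j * ⟪v j, v i⟫ = ∑ t, W i j * (a t j * a t i) := fun i j => by
      rw [aux_inner_eq, Finset.mul_sum]
    simp_rw [h1]
    exact (Finset.sum_congr rfl (fun i _ => Finset.sum_comm)).trans Finset.sum_comm
  have hnv : ‖v‖ ^ 2 = ∑ t, ‖a t‖ ^ 2 := by
    rw [PiLp.norm_sq_eq_of_L2]
    have : ∀ t, ‖a t‖ ^ 2 = ∑ i, (v i t) ^ 2 := by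
      intro t
      rw [EuclideanSpace.norm_eq, Real.sq_sqrt (by positivity)]
      simp [ha, sq_abs]
    simp_rw [this]
    rw [Finset.sum_comm]
    refine Finset.sum_congr rfl fun i _ => ?_
    rw [EuclideanSpace.norm_eq, Real.sq_sqrt (by positivity)]
    simp [sq_abs]
  rw [hsum, hnv, Finset.mul_sum]
  exact Finset.sum_le_sum fun t _ => hscal (a t)

lemma aux_block_abs {n N : ℕ} (W : Matrix (Fin N) (Fin N) ℝ)
    (hWnn : ∀ i j, 0 ≤ W i j)
    (hWrow : ∀ i, ∑ j, W i j = 1)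
    (hWcol : ∀ j, ∑ i, W i j = 1)
    (v : PiLp 2 fun _ : Fin N => EuclideanSpace ℝ (Fin n)) :
    |∑ i, ∑ j, W i j * ⟪v j, v i⟫| ≤ ‖v‖ ^ 2 := by
  have step1 : |∑ i, ∑ j, W i j * ⟪v j, v i⟫| ≤
      ∑ i, ∑ j, W i j * ((‖v i‖ ^ 2 + ‖v j‖ ^ 2) / 2) := by
    refine (Finset.abs_sum_le_sum_abs _ _).trans ?_
    refine Finset.sum_le_sum fun i _ => ?_
    refine (Finset.abs_sum_le_sum_abs _ _).trans ?_
    refine Finset.sum_le_sum fun j _ => ?_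
    rw [abs_mul, abs_of_nonneg (hWnn i j)]
    refine mul_le_mul_of_nonneg_left ?_ (hWnn i j)
    refine (abs_real_inner_le_norm _ _).trans ?_
    nlinarith [sq_nonneg (‖v i‖ - ‖v j‖), norm_nonneg (v i), norm_nonneg (v j)]
  refine step1.trans ?_
  have expand : ∑ i, ∑ j, W i j * ((‖v i‖ ^ 2 + ‖v j‖ ^ 2) / 2) = ‖v‖ ^ 2 := by
    have : ∀ i j, W i j * ((‖v i‖ ^ 2 + ‖v j‖ ^ 2) / 2) =
        W i j * ‖v i‖ ^ 2 / 2 + W i j * ‖v j‖ ^ 2 / 2 := fun i j => by ring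
    simp_rw [this, Finset.sum_add_distrib]
    have h1 : ∑ i, ∑ j, W i j * ‖v i‖ ^ 2 / 2 = ∑ i, ‖v i‖ ^ 2 / 2 := by
      refine Finset.sum_congr rfl fun i _ => ?_
      rw [← Finset.sum_div, ← Finset.sum_mul, hWrow i, one_mul]
    have h2 : ∑ i, ∑ j, W i j * ‖v j‖ ^ 2 / 2 = ∑ j, ‖v j‖ ^ 2 / 2 := by
      rw [Finset.sum_comm]
      refine Finset.sum_congr rfl fun j _ => ?_
      rw [← Finset.sum_div, ← Finset.sum_mul, hWcol j, one_mul]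
    rw [h1, h2, PiLp.norm_sq_eq_of_L2]
    rw [← Finset.sum_add_distrib]
    refine Finset.sum_congr rfl fun i _ => by ring
  exact le_of_eq expand

noncomputable def auxD {n N : ℕ}
    (H : ∀ _ : Fin N, EuclideanSpace ℝ (Fin n) →L[ℝ] EuclideanSpace ℝ (Fin n)) :
    (PiLp 2 fun _ : Fin N => EuclideanSpace ℝ (Fin n)) →L[ℝ]
      (PiLp 2 fun _ : Fin N => EuclideanSpace ℝ (Fin n)) :=
  ⟨{ toFun := fun v => WithLp.toLp 2 (fun i => H i (v i))
     map_add' := by intro v w; refine PiLp.ext fun i => ?_; simp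
     map_smul' := by intro c v; refine PiLp.ext fun i => ?_; simp },
   (PiLp.continuous_toLp 2 _).comp (continuous_pi fun i =>
      (H i).continuous.comp ((continuous_apply i).comp (PiLp.continuous_ofLp 2 _)))⟩

@[simp] lemma auxD_apply {n N : ℕ}
    (H : ∀ _ : Fin N, EuclideanSpace ℝ (Fin n) →L[ℝ] EuclideanSpace ℝ (Fin n))
    (v : PiLp 2 fun _ : Fin N => EuclideanSpace ℝ (Fin n)) (i : Fin N) :
    auxD H v i = H i (v i) := rfl

noncomputable def auxLw {n N : ℕ} (W : Matrix (Fin N) (Fin N) ℝ) :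
    (PiLp 2 fun _ : Fin N => EuclideanSpace ℝ (Fin n)) →L[ℝ]
      (PiLp 2 fun _ : Fin N => EuclideanSpace ℝ (Fin n)) :=
  ⟨{ toFun := fun v => WithLp.toLp 2 (fun i => ∑ j, W i j • v j)
     map_add' := by intro v w; refine PiLp.ext fun i => ?_; simp [Finset.sum_add_distrib, smul_add]
     map_smul' := by intro c v; refine PiLp.ext fun i => ?_; simp [Finset.smul_sum, smul_comm c] },
   (PiLp.continuous_toLp 2 _).comp (continuous_pi fun i => continuous_finset_sum _ fun j _ =>
      (continuous_const (y := W i j)).smul ((continuous_apply j).comp (PiLp.continuous_ofLp 2 _)))⟩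

@[simp] lemma auxLw_apply {n N : ℕ} (W : Matrix (Fin N) (Fin N) ℝ)
    (v : PiLp 2 fun _ : Fin N => EuclideanSpace ℝ (Fin n)) (i : Fin N) :
    auxLw W v i = ∑ j, W i j • v j := rfl

lemma aux_grad_hasFDerivAt {n : ℕ} {g : EuclideanSpace ℝ (Fin n) → ℝ} (hg : ContDiff ℝ 2 g)
    (x : EuclideanSpace ℝ (Fin n)) :
    HasFDerivAt (gradient g) (fderiv ℝ (gradient g) x) x := by
  have h1 : ContDiff ℝ 1 (fderiv ℝ g) := hg.fderiv_right (by norm_num)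
  have h2 : Differentiable ℝ (gradient g) := by
    have heq : gradient g = fun y => (InnerProductSpace.toDual ℝ _).symm (fderiv ℝ g y) := rfl
    rw [heq]
    exact ((InnerProductSpace.toDual ℝ _).symm.toContinuousLinearEquiv :
      _ ≃L[ℝ] _).differentiable.comp (h1.differentiable one_ne_zero)
  exact (h2 x).hasFDerivAt

lemma aux_grad1_hasFDerivAt {n N : ℕ} (f : Fin N → EuclideanSpace ℝ (Fin n) → ℝ)
    (hC2 : ∀ i, ContDiff ℝ 2 (f i)) (z : PiLp 2 fun _ : Fin N => EuclideanSpace ℝ (Fin n)) :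
    HasFDerivAt (E := PiLp 2 fun _ : Fin N => EuclideanSpace ℝ (Fin n))
      (F := PiLp 2 fun _ : Fin N => EuclideanSpace ℝ (Fin n))
      (fun v => WithLp.toLp 2 (fun i => gradient (f i) (v i)))
      (auxD (fun i => fderiv ℝ (gradient (f i)) (z i))) z := by
  let Φ := PiLp.continuousLinearEquiv 2 ℝ (fun _ : Fin N => EuclideanSpace ℝ (Fin n))
  have main : HasFDerivAt (Φ ∘ (fun v : PiLp 2 fun _ : Fin N => EuclideanSpace ℝ (Fin n) =>
        (WithLp.toLp 2 (fun i => gradient (f i) (v i)) : PiLp 2 fun _ : Fin N => EuclideanSpace ℝ (Fin n))))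
      ((Φ : (PiLp 2 fun _ : Fin N => EuclideanSpace ℝ (Fin n)) →L[ℝ]
          (∀ _ : Fin N, EuclideanSpace ℝ (Fin n))).comp
        (auxD fun i => fderiv ℝ (gradient (f i)) (z i))) z := by
    apply hasFDerivAt_pi''
    intro i
    have hp : HasFDerivAt (fun v : PiLp 2 fun _ : Fin N => EuclideanSpace ℝ (Fin n) => v i)
        (PiLp.proj (𝕜 := ℝ) 2 (fun _ : Fin N => EuclideanSpace ℝ (Fin n)) i) z :=
      (PiLp.proj (𝕜 := ℝ) 2 (fun _ : Fin N => EuclideanSpace ℝ (Fin n)) i).hasFDerivAt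
    exact (aux_grad_hasFDerivAt (hC2 i) (z i)).comp z hp
  exact Φ.comp_hasFDerivAt_iff.mp main

lemma aux_opnorm {F : Type*} [NormedAddCommGroup F] [InnerProductSpace ℝ F]
    (A : F →L[ℝ] F) (c : ℝ) (hc : 0 ≤ c)
    (hsym : ∀ u v : F, ⟪A u, v⟫ = ⟪u, A v⟫)
    (hb : ∀ v : F, |⟪A v, v⟫| ≤ c * ‖v‖ ^ 2) : ‖A‖ ≤ c :=
  A.opNorm_le_bound hc (aux_sym_norm A c hsym hb)

lemma aux_lip {F : Type*} [NormedAddCommGroup F] [InnerProductSpace ℝ F]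
    {g : F → F} {A : F → F →L[ℝ] F} (hd : ∀ x, HasFDerivAt g (A x) x)
    {c : ℝ} (hA : ∀ x, ‖A x‖ ≤ c) (u v : F) : ‖g u - g v‖ ≤ c * ‖u - v‖ :=
  convex_univ.norm_image_sub_le_of_norm_hasFDerivWithin_le
    (fun x _ => (hd x).hasFDerivWithinAt) (fun x _ => hA x) (Set.mem_univ v) (Set.mem_univ u)

lemma aux_blocknorm {n N : ℕ} (v w : PiLp 2 fun _ : Fin N => EuclideanSpace ℝ (Fin n))
    (c : ℝ) (hc : 0 ≤ c) (h : ∀ i, ‖v i‖ ≤ c * ‖w i‖) : ‖v‖ ≤ c * ‖w‖ := by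
  have h2 : ‖v‖ ^ 2 ≤ (c * ‖w‖) ^ 2 := by
    rw [PiLp.norm_sq_eq_of_L2, mul_pow, PiLp.norm_sq_eq_of_L2, Finset.mul_sum]
    refine Finset.sum_le_sum fun i _ => ?_
    have := h i
    nlinarith [norm_nonneg (v i), norm_nonneg (w i), mul_nonneg hc (norm_nonneg (w i))]
  nlinarith [norm_nonneg v, mul_nonneg hc (norm_nonneg w)]


noncomputable def auxLam {n N : ℕ} (c : Fin N → ℝ)
    (v : PiLp 2 fun _ : Fin N => EuclideanSpace ℝ (Fin n)) :
    PiLp 2 fun _ : Fin N => EuclideanSpace ℝ (Fin n) := WithLp.toLp 2 (fun i => c i • v i)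

lemma auxLam_norm {n N : ℕ} (c : Fin N → ℝ)
    (v : PiLp 2 fun _ : Fin N => EuclideanSpace ℝ (Fin n)) (b : ℝ) (hb : 0 ≤ b)
    (h : ∀ i, |c i| ≤ b) : ‖auxLam c v‖ ≤ b * ‖v‖ :=
  aux_blocknorm _ _ b hb fun i => by
    rw [show auxLam c v i = c i • v i from rfl, norm_smul, Real.norm_eq_abs]
    exact mul_le_mul_of_nonneg_right (h i) (norm_nonneg _)


set_option maxHeartbeats 2000000 in
/-- Theorem 2, FJ-DGD-N convergence with corrupted updates: with the
`z`-update corrupted by bounded noise `W e_k` (`‖e_k‖ ≤ τ`), the iterates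
`x_k = Λ y_k + (I − Λ) z_k` satisfy
`‖x_k − x̂‖ ≤ ζ^k (‖x_0 − x*‖ + ‖x_0 − x̄‖) + (1 − min_i λ_i) τ ∑_{h<k} ζ^{k−h−1}`,
where `x̂ = Λx* + (I − Λ)x̄` and `ζ = max {|1 − αμ|, |1 − αL|, |λmin(W) − αL|} < 1`. -/
theorem stmt12 {n N : ℕ} [NeZero N]
    (f : Fin N → EuclideanSpace ℝ (Fin n) → ℝ) (μ L α : ℝ)
    (hμ : 0 < μ) (hμL : μ ≤ L) (hα : 0 < α)
    (hC2 : ∀ i, ContDiff ℝ 2 (f i))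
    (hHsym : ∀ i x u v, ⟪fderiv ℝ (gradient (f i)) x u, v⟫ =
      ⟪u, fderiv ℝ (gradient (f i)) x v⟫)
    (hHess : ∀ i x v, μ * ‖v‖ ^ 2 ≤ ⟪fderiv ℝ (gradient (f i)) x v, v⟫ ∧
      ⟪fderiv ℝ (gradient (f i)) x v, v⟫ ≤ L * ‖v‖ ^ 2)
    (W : Matrix (Fin N) (Fin N) ℝ) (hW : W.IsHermitian)
    (hWnn : ∀ i j, 0 ≤ W i j)
    (hWrow : ∀ i, ∑ j, W i j = 1)
    (hWcol : ∀ j, ∑ i, W i j = 1)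
    (ζ : ℝ)
    (hζ : ζ = max (max |1 - α * μ| |1 - α * L|)
      |Finset.univ.inf' Finset.univ_nonempty hW.eigenvalues - α * L|)
    (hζlt : ζ < 1)
    -- `xstar` stacks the unique local minimizers `x_i*` of the `f i`
    (xstar : PiLp 2 fun _ : Fin N => EuclideanSpace ℝ (Fin n))
    (hxstar : ∀ i x, f i (xstar i) ≤ f i x)
    -- `xbar` is the (unique) fixed point of the DGD map
    (xbar : PiLp 2 fun _ : Fin N => EuclideanSpace ℝ (Fin n))
    (hxbar : ∀ i, xbar i = ∑ j, W i j • xbar j - α • gradient (f i) (xbar i))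
    -- Friedkin-Johnsen stubbornness parameters
    (l : Fin N → ℝ) (hl : ∀ i, l i ∈ Set.Icc (0 : ℝ) 1)
    -- bounded noise injected by malicious agents
    (e : ℕ → PiLp 2 fun _ : Fin N => EuclideanSpace ℝ (Fin n))
    (τ : ℝ) (he : ∀ k, ‖e k‖ ≤ τ)
    -- the FJ-DGD-N iterations from a common initial point `x0`
    (x0 : PiLp 2 fun _ : Fin N => EuclideanSpace ℝ (Fin n))
    (y z x : ℕ → PiLp 2 fun _ : Fin N => EuclideanSpace ℝ (Fin n))
    (hy0 : y 0 = x0) (hz0 : z 0 = x0)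
    (hy : ∀ k i, y (k + 1) i = y k i - α • gradient (f i) (y k i))
    (hz : ∀ k i, z (k + 1) i =
      (∑ j, W i j • z k j - α • gradient (f i) (z k i)) + ∑ j, W i j • e k j)
    (hx : ∀ k i, x k i = l i • y k i + (1 - l i) • z k i)
    -- `xhat = Λ x* + (I − Λ) x̄`
    (xhat : PiLp 2 fun _ : Fin N => EuclideanSpace ℝ (Fin n))
    (hxhat : ∀ i, xhat i = l i • xstar i + (1 - l i) • xbar i) :
    ∀ k, ‖x k - xhat‖ ≤ ζ ^ k * (‖x0 - xstar‖ + ‖x0 - xbar‖) +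
      (1 - Finset.univ.inf' Finset.univ_nonempty l) * τ *
        ∑ h ∈ Finset.range k, ζ ^ (k - h - 1) := by
  classical
  set lm := Finset.univ.inf' Finset.univ_nonempty hW.eigenvalues with hlm
  set lmin := Finset.univ.inf' Finset.univ_nonempty l with hlmin
  have hτ : 0 ≤ τ := le_trans (norm_nonneg _) (he 0)
  have hζ0 : 0 ≤ ζ := by rw [hζ]; exact (abs_nonneg _).trans (le_max_right _ _)
  have hWsym : ∀ i j, W i j = W j i := fun i j => by
    have h := congrFun (congrFun hW i) j
    simpa [Matrix.conjTranspose_apply] using h.symm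
  -- the two evolution maps
  set grad1 : (PiLp 2 fun _ : Fin N => EuclideanSpace ℝ (Fin n)) →
      (PiLp 2 fun _ : Fin N => EuclideanSpace ℝ (Fin n)) :=
    fun v => WithLp.toLp 2 (fun i => gradient (f i) (v i)) with hgrad1
  set D : (PiLp 2 fun _ : Fin N => EuclideanSpace ℝ (Fin n)) →
      ((PiLp 2 fun _ : Fin N => EuclideanSpace ℝ (Fin n)) →L[ℝ]
        (PiLp 2 fun _ : Fin N => EuclideanSpace ℝ (Fin n))) :=
    fun w => auxD (fun i => fderiv ℝ (gradient (f i)) (w i)) with hD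
  -- inner product computations
  have hDinner : ∀ w (u v : PiLp 2 fun _ : Fin N => EuclideanSpace ℝ (Fin n)),
      ⟪D w u, v⟫ = ∑ i, ⟪fderiv ℝ (gradient (f i)) (w i) (u i), v i⟫ := by
    intro w u v
    rw [PiLp.inner_apply]
    rfl
  have hDsym : ∀ w (u v : PiLp 2 fun _ : Fin N => EuclideanSpace ℝ (Fin n)),
      ⟪D w u, v⟫ = ⟪u, D w v⟫ := by
    intro w u v
    rw [hDinner, PiLp.inner_apply]
    exact Finset.sum_congr rfl fun i _ => hHsym i (w i) (u i) (v i)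
  have hDform : ∀ w (v : PiLp 2 fun _ : Fin N => EuclideanSpace ℝ (Fin n)),
      μ * ‖v‖ ^ 2 ≤ ⟪D w v, v⟫ ∧ ⟪D w v, v⟫ ≤ L * ‖v‖ ^ 2 := by
    intro w v
    rw [hDinner, PiLp.norm_sq_eq_of_L2]
    constructor
    · rw [Finset.mul_sum]
      exact Finset.sum_le_sum fun i _ => (hHess i (w i) (v i)).1
    · rw [Finset.mul_sum]
      exact Finset.sum_le_sum fun i _ => (hHess i (w i) (v i)).2
  have hLwinner : ∀ (u v : PiLp 2 fun _ : Fin N => EuclideanSpace ℝ (Fin n)),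
      ⟪auxLw W u, v⟫ = ∑ i, ∑ j, W i j * ⟪u j, v i⟫ := by
    intro u v
    rw [PiLp.inner_apply]
    refine Finset.sum_congr rfl fun i _ => ?_
    rw [auxLw_apply, sum_inner]
    exact Finset.sum_congr rfl fun j _ => real_inner_smul_left _ _ _
  have hLwsym : ∀ (u v : PiLp 2 fun _ : Fin N => EuclideanSpace ℝ (Fin n)),
      ⟪auxLw W u, v⟫ = ⟪u, auxLw W v⟫ := by
    intro u v
    rw [hLwinner, real_inner_comm, hLwinner]
    rw [Finset.sum_comm]
    refine Finset.sum_congr rfl fun i _ => Finset.sum_congr rfl fun j _ => ?_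
    rw [hWsym i j, real_inner_comm]
  -- contraction constants
  have hζ1 : max |1 - α*μ| |1 - α*L| ≤ ζ := by rw [hζ]; exact le_max_left _ _
  have hζ2 : |lm - α*L| ≤ ζ := by rw [hζ]; exact le_max_right _ _
  have hg1 : ∀ w, HasFDerivAt grad1 (D w) w := fun w => by
    rw [hgrad1, hD]; exact aux_grad1_hasFDerivAt f hC2 w
  -- the Y map
  have hYd : ∀ w, HasFDerivAt
      (fun v : PiLp 2 fun _ : Fin N => EuclideanSpace ℝ (Fin n) => v - α • grad1 v)
      (ContinuousLinearMap.id ℝ (PiLp 2 fun _ : Fin N => EuclideanSpace ℝ (Fin n))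
        - α • D w) w :=
    fun w => (hasFDerivAt_id w).sub ((hg1 w).const_smul α)
  have hYb : ∀ w, ‖ContinuousLinearMap.id ℝ (PiLp 2 fun _ : Fin N => EuclideanSpace ℝ (Fin n))
      - α • D w‖ ≤ max |1 - α*μ| |1 - α*L| := by
    intro w
    refine aux_opnorm _ _ (le_trans (abs_nonneg _) (le_max_left _ _)) ?_ ?_
    · intro u v
      simp only [ContinuousLinearMap.sub_apply, ContinuousLinearMap.smul_apply,
        ContinuousLinearMap.id_apply, inner_sub_left, inner_sub_right,
        real_inner_smul_left, real_inner_smul_right]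
      rw [hDsym]
    · intro v
      have hq := hDform w v
      simp only [ContinuousLinearMap.sub_apply, ContinuousLinearMap.smul_apply,
        ContinuousLinearMap.id_apply, inner_sub_left, real_inner_smul_left,
        real_inner_self_eq_norm_sq]
      rw [abs_le]
      constructor
      · nlinarith [hq.1, hq.2, sq_nonneg ‖v‖, hα,
          mul_le_mul_of_nonneg_left hq.2 hα.le,
          mul_le_mul_of_nonneg_right (neg_abs_le (1 - α*L)) (sq_nonneg ‖v‖),
          mul_le_mul_of_nonneg_right (le_max_right |1 - α*μ| |1 - α*L|) (sq_nonneg ‖v‖)]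
      · nlinarith [hq.1, sq_nonneg ‖v‖, hα,
          mul_le_mul_of_nonneg_left hq.1 hα.le,
          mul_le_mul_of_nonneg_right (le_abs_self (1 - α*μ)) (sq_nonneg ‖v‖),
          mul_le_mul_of_nonneg_right (le_max_left |1 - α*μ| |1 - α*L|) (sq_nonneg ‖v‖)]
  have hYlip : ∀ u v : PiLp 2 fun _ : Fin N => EuclideanSpace ℝ (Fin n),
      ‖(u - α • grad1 u) - (v - α • grad1 v)‖ ≤ ζ * ‖u - v‖ := fun u v =>
    le_trans (aux_lip hYd hYb u v) (mul_le_mul_of_nonneg_right hζ1 (norm_nonneg _))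
  -- the T map
  have hTd : ∀ w, HasFDerivAt
      (fun v : PiLp 2 fun _ : Fin N => EuclideanSpace ℝ (Fin n) => auxLw W v - α • grad1 v)
      (auxLw W - α • D w) w :=
    fun w => ((auxLw W).hasFDerivAt).sub ((hg1 w).const_smul α)
  have hTb : ∀ w, ‖auxLw (n := n) W - α • D w‖ ≤ ζ := by
    intro w
    refine aux_opnorm _ _ hζ0 ?_ ?_
    · intro u v
      simp only [ContinuousLinearMap.sub_apply, ContinuousLinearMap.smul_apply,
        inner_sub_left, inner_sub_right, real_inner_smul_left, real_inner_smul_right]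
      rw [hLwsym, hDsym]
    · intro v
      have hq := hDform w v
      have hQl := aux_block_low W hW v
      have hQa := aux_block_abs W hWnn hWrow hWcol v
      have hQu : ∑ i, ∑ j, W i j * ⟪v j, v i⟫ ≤ ‖v‖ ^ 2 := le_trans (le_abs_self _) hQa
      simp only [ContinuousLinearMap.sub_apply, ContinuousLinearMap.smul_apply,
        inner_sub_left, real_inner_smul_left]
      rw [hLwinner]
      rw [abs_le]
      constructor
      · nlinarith [hq.2, hα, hQl,
          mul_le_mul_of_nonneg_left hq.2 hα.le,
          mul_le_mul_of_nonneg_right (neg_abs_le (lm - α*L)) (sq_nonneg ‖v‖),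
          mul_le_mul_of_nonneg_right hζ2 (sq_nonneg ‖v‖)]
      · nlinarith [hq.1, hα, hQu,
          mul_le_mul_of_nonneg_left hq.1 hα.le,
          mul_le_mul_of_nonneg_right (le_abs_self (1 - α*μ)) (sq_nonneg ‖v‖),
          mul_le_mul_of_nonneg_right (le_trans (le_max_left |1 - α*μ| |1 - α*L|) hζ1)
            (sq_nonneg ‖v‖)]
  have hTlip : ∀ u v : PiLp 2 fun _ : Fin N => EuclideanSpace ℝ (Fin n),
      ‖(auxLw W u - α • grad1 u) - (auxLw W v - α • grad1 v)‖ ≤ ζ * ‖u - v‖ :=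
    aux_lip hTd hTb
  -- noise operator bound
  have hLwnorm : ∀ w : PiLp 2 fun _ : Fin N => EuclideanSpace ℝ (Fin n),
      ‖auxLw W w‖ ≤ ‖w‖ := by
    intro w
    have h := aux_sym_norm (auxLw W) 1 hLwsym
      (fun v => by rw [hLwinner]; simpa using aux_block_abs W hWnn hWrow hWcol v) w
    simpa using h
  -- fixed points
  have hgradstar : ∀ i, gradient (f i) (xstar i) = 0 := by
    intro i
    have hmin : IsLocalMin (f i) (xstar i) := Filter.Eventually.of_forall (fun x => hxstar i x)
    have : gradient (f i) (xstar i) =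
        (InnerProductSpace.toDual ℝ _).symm (fderiv ℝ (f i) (xstar i)) := rfl
    rw [this, hmin.fderiv_eq_zero, map_zero]
  have hYfix : xstar - α • grad1 xstar = xstar := by
    refine PiLp.ext fun i => ?_
    simp [hgrad1, PiLp.sub_apply, PiLp.smul_apply, hgradstar i]
  have hTfix : auxLw W xbar - α • grad1 xbar = xbar := by
    refine PiLp.ext fun i => ?_
    have := (hxbar i).symm
    simpa [hgrad1, PiLp.sub_apply, PiLp.smul_apply] using this
  -- iteration equalities
  have hyE : ∀ k, y (k+1) = y k - α • grad1 (y k) := by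
    intro k; refine PiLp.ext fun i => ?_
    rw [hy k i]
    simp [hgrad1, PiLp.sub_apply, PiLp.smul_apply]
  have hzE : ∀ k, z (k+1) = (auxLw W (z k) - α • grad1 (z k)) + auxLw W (e k) := by
    intro k; refine PiLp.ext fun i => ?_
    rw [hz k i]
    simp [hgrad1, PiLp.add_apply, PiLp.sub_apply, PiLp.smul_apply]
  -- recurrences
  have hYk : ∀ k, ‖y k - xstar‖ ≤ ζ ^ k * ‖x0 - xstar‖ := by
    intro k
    induction k with
    | zero => simp [hy0]
    | succ k ih =>
      have h1 : ‖y (k+1) - xstar‖ ≤ ζ * ‖y k - xstar‖ := by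
        calc ‖y (k+1) - xstar‖
            = ‖(y k - α • grad1 (y k)) - (xstar - α • grad1 xstar)‖ := by
              rw [hyE k, hYfix]
          _ ≤ ζ * ‖y k - xstar‖ := hYlip (y k) xstar
      calc ‖y (k+1) - xstar‖ ≤ ζ * ‖y k - xstar‖ := h1
        _ ≤ ζ * (ζ ^ k * ‖x0 - xstar‖) := mul_le_mul_of_nonneg_left ih hζ0
        _ = ζ ^ (k+1) * ‖x0 - xstar‖ := by ring
  have hgeom : ∀ m, ∑ h ∈ Finset.range m, ζ ^ (m - h - 1) =
      ∑ j ∈ Finset.range m, ζ ^ j := by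
    intro m
    have hre : ∀ h, m - h - 1 = m - 1 - h := fun h => Nat.sub_right_comm m h 1
    simp_rw [hre]
    exact Finset.sum_range_reflect _ m
  have hZk : ∀ k, ‖z k - xbar‖ ≤ ζ ^ k * ‖x0 - xbar‖ +
      τ * ∑ h ∈ Finset.range k, ζ ^ (k - h - 1) := by
    intro k
    induction k with
    | zero => simp [hz0]
    | succ k ih =>
      have h1 : ‖z (k+1) - xbar‖ ≤ ζ * ‖z k - xbar‖ + τ := by
        calc ‖z (k+1) - xbar‖
            = ‖((auxLw W (z k) - α • grad1 (z k)) - (auxLw W xbar - α • grad1 xbar))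
                + auxLw W (e k)‖ := by
              rw [hzE k, hTfix]; abel_nf
          _ ≤ ‖(auxLw W (z k) - α • grad1 (z k)) - (auxLw W xbar - α • grad1 xbar)‖
                + ‖auxLw W (e k)‖ := norm_add_le _ _
          _ ≤ ζ * ‖z k - xbar‖ + τ := by
              gcongr
              · exact hTlip (z k) xbar
              · exact le_trans (hLwnorm (e k)) (he k)
      have hS : ∑ h ∈ Finset.range (k+1), ζ ^ (k + 1 - h - 1) =
          ζ * ∑ h ∈ Finset.range k, ζ ^ (k - h - 1) + 1 := by
        rw [hgeom, hgeom, geom_sum_succ]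
      calc ‖z (k+1) - xbar‖ ≤ ζ * ‖z k - xbar‖ + τ := h1
        _ ≤ ζ * (ζ ^ k * ‖x0 - xbar‖ + τ * ∑ h ∈ Finset.range k, ζ ^ (k - h - 1)) + τ :=
            by gcongr
        _ = ζ ^ (k+1) * ‖x0 - xbar‖ +
            τ * (ζ * ∑ h ∈ Finset.range k, ζ ^ (k - h - 1) + 1) := by ring
        _ = ζ ^ (k+1) * ‖x0 - xbar‖ +
            τ * ∑ h ∈ Finset.range (k+1), ζ ^ (k + 1 - h - 1) := by rw [hS]
  -- min of stubbornness
  obtain ⟨i0, _⟩ := Finset.univ_nonempty (α := Fin N)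
  have hlmin0 : 0 ≤ lmin := by
    rw [hlmin]
    exact Finset.le_inf' _ _ fun i _ => (hl i).1
  have hlmin1 : lmin ≤ 1 := le_trans (Finset.inf'_le _ (Finset.mem_univ i0)) (hl i0).2
  have hlminle : ∀ i, lmin ≤ l i := fun i => Finset.inf'_le _ (Finset.mem_univ i)
  -- final bound
  intro k
  have hxdiff : x k - xhat = auxLam l (y k - xstar) + auxLam (fun i => 1 - l i) (z k - xbar) := by
    refine PiLp.ext fun i => ?_
    show x k i - xhat i = auxLam l (y k - xstar) i + auxLam (fun i => 1 - l i) (z k - xbar) i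
    rw [show auxLam l (y k - xstar) i = l i • (y k - xstar) i from rfl,
      show auxLam (fun i => 1 - l i) (z k - xbar) i = (1 - l i) • (z k - xbar) i from rfl,
      PiLp.sub_apply, PiLp.sub_apply, hx k i, hxhat i, smul_sub, smul_sub]
    abel
  have hA1 : ‖auxLam l (y k - xstar)‖ ≤ 1 * ‖y k - xstar‖ :=
    auxLam_norm _ _ 1 zero_le_one fun i => by
      rw [abs_of_nonneg (hl i).1]; exact (hl i).2
  have hA2 : ‖auxLam (fun i => 1 - l i) (z k - xbar)‖ ≤ (1 - lmin) * ‖z k - xbar‖ :=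
    auxLam_norm _ _ _ (by linarith) fun i => by
      rw [abs_of_nonneg (by linarith [(hl i).2])]; linarith [hlminle i]
  have hnorm : ‖x k - xhat‖ ≤ 1 * ‖y k - xstar‖ + (1 - lmin) * ‖z k - xbar‖ := by
    rw [hxdiff]
    exact le_trans (norm_add_le _ _) (add_le_add hA1 hA2)
  have hpow : (0:ℝ) ≤ ζ ^ k := pow_nonneg hζ0 k
  have hy' := hYk k
  have hz' := hZk k
  have hz'' : (1 - lmin) * ‖z k - xbar‖ ≤
      (1 - lmin) * (ζ ^ k * ‖x0 - xbar‖ + τ * ∑ h ∈ Finset.range k, ζ ^ (k - h - 1)) :=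
    mul_le_mul_of_nonneg_left hz' (by linarith)
  have hzz : 0 ≤ lmin * (ζ ^ k * ‖x0 - xbar‖) :=
    mul_nonneg hlmin0 (mul_nonneg hpow (norm_nonneg _))
  nlinarith [hnorm, hy', hz'', hzz, norm_nonneg (x0 - xbar), norm_nonneg (x0 - xstar)]
end
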